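/- arXiv:2412.00336 — 3 statements merged into one kernel-verified Lean document; each statement's English description precedes it below -/
import Mathlib

section
/- Let c_n denote the number of nonnesting permutations of the multiset {1,1,2,2,…,n,n} that avoid all three patterns 123, 132, and 213. Then c_0 = c_1 = 1, c_2 = 4, and for all n ≥ 3, c_n = 2c_{n−1} + 2c_{n−2} − 2c_{n−3}. -/
/-- `w` is a permutation of the multiset `{1,1,2,2,…,n,n}`:
a word in which every value in `{1,…,n}` occurs exactly twice
and no other value occurs. -/
def IsMultisetPerm (n : ℕ) (w : List ℕ) : Prop :=
  ∀ i : ℕ, w.count i = if 1 ≤ i ∧ i ≤ n then 2 else 0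

/-- `t` is order-isomorphic to the word `σ`:
same length, and entries compare (both `<` and `=`) in the same way. -/
def OrderIsoWord (t σ : List ℕ) : Prop :=
  t.length = σ.length ∧
  ∀ r s : ℕ, r < σ.length → s < σ.length →
    ((t.getD r 0 < t.getD s 0 ↔ σ.getD r 0 < σ.getD s 0) ∧
     (t.getD r 0 = t.getD s 0 ↔ σ.getD r 0 = σ.getD s 0))

/-- `w` contains the pattern `σ`: some subsequence of `w`
is order-isomorphic to `σ`. -/
def Contains (w σ : List ℕ) : Prop :=
  ∃ t : List ℕ, t.Sublist w ∧ OrderIsoWord t σ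

/-- `w` avoids the pattern `σ`. -/
def Avoids (w σ : List ℕ) : Prop := ¬ Contains w σ

/-- `w` is a nonnesting permutation of `{1,1,2,2,…,n,n}`:
it avoids the patterns `1221` and `2112`. -/
def IsNonnesting (n : ℕ) (w : List ℕ) : Prop :=
  IsMultisetPerm n w ∧ Avoids w [1,2,2,1] ∧ Avoids w [2,1,1,2]


open List

/-- clean combined avoidance predicate -/
def Good (w : List ℕ) : Prop :=
  (∀ a b c : ℕ, [a,b,c] <+ w → a < c → b = a ∨ b = c) ∧
  (∀ a b : ℕ, [a,b,b,a] <+ w → a = b)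

open List

lemma length_three_cases {t : List ℕ} (h : t.length = 3) :
    ∃ a b c, t = [a,b,c] := by
  match t, h with
  | [a,b,c], _ => exact ⟨a,b,c, rfl⟩

lemma length_four_cases {t : List ℕ} (h : t.length = 4) :
    ∃ a b c d, t = [a,b,c,d] := by
  match t, h with
  | [a,b,c,d], _ => exact ⟨a,b,c,d, rfl⟩

lemma orderIso3 {a b c x y z : ℕ} :
    OrderIsoWord [a,b,c] [x,y,z] ↔
      ((a < b ↔ x < y) ∧ (a = b ↔ x = y) ∧ (b < c ↔ y < z) ∧ (b = c ↔ y = z)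
        ∧ (a < c ↔ x < z) ∧ (a = c ↔ x = z)) := by
  constructor
  · rintro ⟨-, h⟩
    refine ⟨(h 0 1 (by norm_num) (by norm_num)).1, (h 0 1 (by norm_num) (by norm_num)).2,
      (h 1 2 (by norm_num) (by norm_num)).1, (h 1 2 (by norm_num) (by norm_num)).2,
      (h 0 2 (by norm_num) (by norm_num)).1, (h 0 2 (by norm_num) (by norm_num)).2⟩
  · rintro ⟨h1, h2, h3, h4, h5, h6⟩
    refine ⟨rfl, ?_⟩
    intro r s hr hs
    simp only [List.length_cons, List.length_nil] at hr hs
    interval_cases r <;> interval_cases s <;>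
      simp_all [List.getD] <;> omega

lemma orderIso4 {a b c d x y z u : ℕ} :
    OrderIsoWord [a,b,c,d] [x,y,z,u] ↔
      ((a < b ↔ x < y) ∧ (a = b ↔ x = y) ∧ (a < c ↔ x < z) ∧ (a = c ↔ x = z)
        ∧ (a < d ↔ x < u) ∧ (a = d ↔ x = u) ∧ (b < c ↔ y < z) ∧ (b = c ↔ y = z)
        ∧ (b < d ↔ y < u) ∧ (b = d ↔ y = u) ∧ (c < d ↔ z < u) ∧ (c = d ↔ z = u)) := by
  constructor
  · rintro ⟨-, h⟩
    exact ⟨(h 0 1 (by norm_num) (by norm_num)).1, (h 0 1 (by norm_num) (by norm_num)).2,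
      (h 0 2 (by norm_num) (by norm_num)).1, (h 0 2 (by norm_num) (by norm_num)).2,
      (h 0 3 (by norm_num) (by norm_num)).1, (h 0 3 (by norm_num) (by norm_num)).2,
      (h 1 2 (by norm_num) (by norm_num)).1, (h 1 2 (by norm_num) (by norm_num)).2,
      (h 1 3 (by norm_num) (by norm_num)).1, (h 1 3 (by norm_num) (by norm_num)).2,
      (h 2 3 (by norm_num) (by norm_num)).1, (h 2 3 (by norm_num) (by norm_num)).2⟩
  · rintro ⟨h1,h2,h3,h4,h5,h6,h7,h8,h9,h10,h11,h12⟩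
    refine ⟨rfl, ?_⟩
    intro r s hr hs
    simp only [List.length_cons, List.length_nil] at hr hs
    interval_cases r <;> interval_cases s <;>
      simp_all [List.getD] <;> omega

/-- the five avoidance conditions together are equivalent to `Good`. -/
lemma avoids_iff_good (w : List ℕ) :
    (Avoids w [1,2,2,1] ∧ Avoids w [2,1,1,2] ∧ Avoids w [1,2,3] ∧
      Avoids w [1,3,2] ∧ Avoids w [2,1,3]) ↔ Good w := by
  constructor
  · rintro ⟨h1221, h2112, h123, h132, h213⟩
    constructor
    · intro a b c hsub hac
      by_contra hb
      push_neg at hb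
      obtain ⟨hba, hbc⟩ := hb
      rcases Nat.lt_trichotomy b a with h | h | h
      · exact h213 ⟨[a,b,c], hsub, orderIso3.2 (by omega)⟩
      · omega
      · rcases Nat.lt_trichotomy b c with h' | h' | h'
        · exact h123 ⟨[a,b,c], hsub, orderIso3.2 (by omega)⟩
        · exact hbc h'
        · exact h132 ⟨[a,b,c], hsub, orderIso3.2 (by omega)⟩
    · intro a b hsub
      by_contra hab
      rcases Nat.lt_trichotomy a b with h | h | h
      · exact h1221 ⟨[a,b,b,a], hsub, orderIso4.2 (by omega)⟩
      · exact hab h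
      · exact h2112 ⟨[a,b,b,a], hsub, orderIso4.2 (by omega)⟩
  · rintro ⟨g3, g4⟩
    refine ⟨?_, ?_, ?_, ?_, ?_⟩
    · rintro ⟨t, hsub, hiso⟩
      obtain ⟨a,b,c,d, rfl⟩ := length_four_cases (hiso.1.trans rfl)
      rw [orderIso4] at hiso
      have hbc : b = c := by omega
      have had : a = d := by omega
      rw [← hbc, ← had] at hsub
      have := g4 a b hsub
      omega
    · rintro ⟨t, hsub, hiso⟩
      obtain ⟨a,b,c,d, rfl⟩ := length_four_cases (hiso.1.trans rfl)
      rw [orderIso4] at hiso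
      have hbc : b = c := by omega
      have had : a = d := by omega
      rw [← hbc, ← had] at hsub
      have := g4 a b hsub
      omega
    · rintro ⟨t, hsub, hiso⟩
      obtain ⟨a,b,c, rfl⟩ := length_three_cases (hiso.1.trans rfl)
      rw [orderIso3] at hiso
      have := g3 a b c hsub (by omega)
      omega
    · rintro ⟨t, hsub, hiso⟩
      obtain ⟨a,b,c, rfl⟩ := length_three_cases (hiso.1.trans rfl)
      rw [orderIso3] at hiso
      have := g3 a b c hsub (by omega)
      omega
    · rintro ⟨t, hsub, hiso⟩
      obtain ⟨a,b,c, rfl⟩ := length_three_cases (hiso.1.trans rfl)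
      rw [orderIso3] at hiso
      have := g3 a b c hsub (by omega)
      omega


lemma csub {x a : ℕ} {l L : List ℕ} :
    (x :: l <+ a :: L) ↔ ((x :: l) <+ L ∨ (x = a ∧ l <+ L)) := by
  constructor
  · intro h
    cases h with
    | cons _ h => exact Or.inl h
    | cons_cons _ h => exact Or.inr ⟨rfl, h⟩
  · rintro (h | ⟨rfl, h⟩)
    · exact h.cons _
    · exact h.cons₂ _

/-- The set counted by `c n`. -/
def S (n : ℕ) : Set (List ℕ) := {w | IsMultisetPerm n w ∧ Good w}

/-- The subset of `S n` of words starting with the letter `n`. -/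
def E (n : ℕ) : Set (List ℕ) := {w | w ∈ S n ∧ ∃ v, w = n :: v}

lemma S_eq (n : ℕ) :
    {w : List ℕ | IsNonnesting n w ∧ Avoids w [1,2,3] ∧ Avoids w [1,3,2] ∧ Avoids w [2,1,3]}
      = S n := by
  ext w
  simp only [Set.mem_setOf_eq, IsNonnesting, S]
  constructor
  · rintro ⟨⟨h1, h2, h3⟩, h4, h5, h6⟩
    exact ⟨h1, (avoids_iff_good w).1 ⟨h2, h3, h4, h5, h6⟩⟩
  · rintro ⟨h1, hg⟩
    obtain ⟨h2, h3, h4, h5, h6⟩ := (avoids_iff_good w).2 hg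
    exact ⟨⟨h1, h2, h3⟩, h4, h5, h6⟩

lemma good_mono {v w : List ℕ} (h : v <+ w) (hw : Good w) : Good v :=
  ⟨fun a b c hs hac => hw.1 a b c (hs.trans h) hac, fun a b hs => hw.2 a b (hs.trans h)⟩

lemma mem_bounds {n : ℕ} {w : List ℕ} (hw : IsMultisetPerm n w) {x : ℕ} (hx : x ∈ w) :
    1 ≤ x ∧ x ≤ n := by
  have := hw x
  by_contra hc
  rw [if_neg hc] at this
  exact (List.count_eq_zero.1 this) hx

lemma pair_sublist {x y : ℕ} {l : List ℕ} (hx : x ∈ l) (hy : y ∈ l) (hxy : x ≠ y) :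
    [x, y] <+ l ∨ [y, x] <+ l := by
  induction l with
  | nil => simp at hx
  | cons a t ih =>
    by_cases hxa : x = a
    · subst hxa
      have hy' : y ∈ t := (List.mem_cons.1 hy).resolve_left (Ne.symm hxy)
      exact Or.inl ((List.singleton_sublist.2 hy').cons₂ x)
    · have hx' : x ∈ t := (List.mem_cons.1 hx).resolve_left hxa
      by_cases hya : y = a
      · subst hya
        exact Or.inr ((List.singleton_sublist.2 hx').cons₂ y)
      · have hy' : y ∈ t := (List.mem_cons.1 hy).resolve_left hya
        rcases ih hx' hy' with h | h
        · exact Or.inl (h.cons a)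
        · exact Or.inr (h.cons a)

/-- triples across a dominated suffix. -/
lemma dom3 {P u : List ℕ}
    (hP : ∀ a b c : ℕ, [a,b,c] <+ P → a < c → b = a ∨ b = c)
    (hu : ∀ a b c : ℕ, [a,b,c] <+ u → a < c → b = a ∨ b = c)
    (hle : ∀ x ∈ P, ∀ y ∈ u, y ≤ x) :
    ∀ a b c : ℕ, [a,b,c] <+ P ++ u → a < c → b = a ∨ b = c := by
  intro a b c hs hac
  rw [List.sublist_append_iff] at hs
  obtain ⟨t1, t2, heq, h1, h2⟩ := hs
  rcases t1 with _ | ⟨p, _ | ⟨q, _ | ⟨r, rest⟩⟩⟩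
  · rw [List.nil_append] at heq
    exact hu a b c (heq ▸ h2) hac
  · simp only [List.cons_append, List.nil_append, List.cons.injEq] at heq
    obtain ⟨rfl, heq2⟩ := heq
    have hcu : c ∈ u := h2.subset (by rw [← heq2]; simp)
    have haP : a ∈ P := h1.subset (by simp)
    exact absurd hac (by have := hle a haP c hcu; omega)
  · simp only [List.cons_append, List.nil_append, List.cons.injEq] at heq
    obtain ⟨rfl, rfl, heq2⟩ := heq
    have hcu : c ∈ u := h2.subset (by rw [← heq2]; simp)
    have haP : a ∈ P := h1.subset (by simp)
    exact absurd hac (by have := hle a haP c hcu; omega)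
  · rcases rest with _ | ⟨s, rest⟩
    · simp only [List.cons_append, List.nil_append, List.cons.injEq] at heq
      obtain ⟨rfl, rfl, rfl, -⟩ := heq
      exact hP a b c h1 hac
    · simp at heq

/-- quadruple patterns across a strictly dominated suffix. -/
lemma dom4 {P u : List ℕ}
    (hP : ∀ a b : ℕ, [a,b,b,a] <+ P → a = b)
    (hu : ∀ a b : ℕ, [a,b,b,a] <+ u → a = b)
    (hlt : ∀ x ∈ P, ∀ y ∈ u, y < x) :
    ∀ a b : ℕ, [a,b,b,a] <+ P ++ u → a = b := by
  intro a b hs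
  rw [List.sublist_append_iff] at hs
  obtain ⟨t1, t2, heq, h1, h2⟩ := hs
  rcases t1 with _ | ⟨p, _ | ⟨q, _ | ⟨r, _ | ⟨s, rest⟩⟩⟩⟩
  · rw [List.nil_append] at heq
    exact hu a b (heq ▸ h2)
  · simp only [List.cons_append, List.nil_append, List.cons.injEq] at heq
    obtain ⟨rfl, heq2⟩ := heq
    have hau : a ∈ u := h2.subset (by rw [← heq2]; simp)
    have haP : a ∈ P := h1.subset (by simp)
    exact absurd (hlt a haP a hau) (lt_irrefl a)
  · simp only [List.cons_append, List.nil_append, List.cons.injEq] at heq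
    obtain ⟨rfl, rfl, heq2⟩ := heq
    have hau : a ∈ u := h2.subset (by rw [← heq2]; simp)
    have haP : a ∈ P := h1.subset (by simp)
    exact absurd (hlt a haP a hau) (lt_irrefl a)
  · simp only [List.cons_append, List.nil_append, List.cons.injEq] at heq
    obtain ⟨rfl, rfl, rfl, heq2⟩ := heq
    have hau : a ∈ u := h2.subset (by rw [← heq2]; simp)
    have haP : a ∈ P := h1.subset (by simp)
    exact absurd (hlt a haP a hau) (lt_irrefl a)
  · rcases rest with _ | ⟨x, rest⟩
    · simp only [List.cons_append, List.nil_append, List.cons.injEq] at heq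
      obtain ⟨rfl, rfl, rfl, rfl, -⟩ := heq
      exact hP a b h1
    · simp at heq


section Maps
variable (m : ℕ)

lemma countA1 {u : List ℕ} (hu : IsMultisetPerm (m+2) u) :
    IsMultisetPerm (m+3) ((m+3)::(m+3)::u) := by
  intro i
  have := hu i
  simp only [List.count_cons, beq_iff_eq] at *
  split_ifs at this ⊢ <;> omega

lemma countA2 {u : List ℕ} (hu : IsMultisetPerm (m+1) u) :
    IsMultisetPerm (m+3) ((m+2)::(m+2)::(m+3)::(m+3)::u) := by
  intro i
  have := hu i
  simp only [List.count_cons, beq_iff_eq] at *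
  split_ifs at this ⊢ <;> omega

lemma countA3 {u : List ℕ} (hu : IsMultisetPerm (m+1) u) :
    IsMultisetPerm (m+3) ((m+2)::(m+3)::(m+2)::(m+3)::u) := by
  intro i
  have := hu i
  simp only [List.count_cons, beq_iff_eq] at *
  split_ifs at this ⊢ <;> omega

lemma countA4 {u : List ℕ} (hu : IsMultisetPerm (m+1) u) :
    IsMultisetPerm (m+3) ((m+3)::(m+2)::(m+3)::(m+2)::u) := by
  intro i
  have := hu i
  simp only [List.count_cons, beq_iff_eq] at *
  split_ifs at this ⊢ <;> omega

lemma countA5 {u : List ℕ} (hu : IsMultisetPerm (m+1) ((m+1)::u)) :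
    IsMultisetPerm (m+3) ((m+3)::(m+2)::(m+3)::(m+1)::(m+2)::u) := by
  intro i
  have := hu i
  simp only [List.count_cons, beq_iff_eq] at *
  split_ifs at this ⊢ <;> omega

lemma mapA1 {u : List ℕ} (hu : u ∈ S (m+2)) : (m+3)::(m+3)::u ∈ S (m+3) := by
  obtain ⟨hc, hg⟩ := hu
  refine ⟨countA1 m hc, ?_, ?_⟩
  · show ∀ a b c : ℕ, [a,b,c] <+ [m+3,m+3] ++ u → a < c → b = a ∨ b = c
    refine dom3 ?_ hg.1 ?_
    · intro a b c h hac
      simp only [csub, List.sublist_nil, List.nil_sublist, List.cons_ne_nil, and_true,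
        and_false, or_false, false_or, false_and, or_self] at h
    · intro x hx y hy
      have h1 := (mem_bounds hc hy).2
      simp only [List.mem_cons, List.not_mem_nil, or_false] at hx
      omega
  · show ∀ a b : ℕ, [a,b,b,a] <+ [m+3,m+3] ++ u → a = b
    refine dom4 ?_ hg.2 ?_
    · intro a b h
      simp only [csub, List.sublist_nil, List.nil_sublist, List.cons_ne_nil, and_true,
        and_false, or_false, false_or, false_and, or_self] at h
    · intro x hx y hy
      have h1 := (mem_bounds hc hy).2
      simp only [List.mem_cons, List.not_mem_nil, or_false] at hx
      omega

lemma mapA2 {u : List ℕ} (hu : u ∈ S (m+1)) : (m+2)::(m+2)::(m+3)::(m+3)::u ∈ S (m+3) := by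
  obtain ⟨hc, hg⟩ := hu
  refine ⟨countA2 m hc, ?_, ?_⟩
  · show ∀ a b c : ℕ, [a,b,c] <+ [m+2,m+2,m+3,m+3] ++ u → a < c → b = a ∨ b = c
    refine dom3 ?_ hg.1 ?_
    · intro a b c h hac
      simp only [csub, List.sublist_nil, List.nil_sublist, List.cons_ne_nil, and_true,
        and_false, or_false, false_or, false_and, or_self] at h
      omega
    · intro x hx y hy
      have h1 := (mem_bounds hc hy).2
      simp only [List.mem_cons, List.not_mem_nil, or_false] at hx
      omega
  · show ∀ a b : ℕ, [a,b,b,a] <+ [m+2,m+2,m+3,m+3] ++ u → a = b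
    refine dom4 ?_ hg.2 ?_
    · intro a b h
      simp only [csub, List.sublist_nil, List.nil_sublist, List.cons_ne_nil, and_true,
        and_false, or_false, false_or, false_and, or_self] at h
      omega
    · intro x hx y hy
      have h1 := (mem_bounds hc hy).2
      simp only [List.mem_cons, List.not_mem_nil, or_false] at hx
      omega

lemma mapA3 {u : List ℕ} (hu : u ∈ S (m+1)) : (m+2)::(m+3)::(m+2)::(m+3)::u ∈ S (m+3) := by
  obtain ⟨hc, hg⟩ := hu
  refine ⟨countA3 m hc, ?_, ?_⟩
  · show ∀ a b c : ℕ, [a,b,c] <+ [m+2,m+3,m+2,m+3] ++ u → a < c → b = a ∨ b = c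
    refine dom3 ?_ hg.1 ?_
    · intro a b c h hac
      simp only [csub, List.sublist_nil, List.nil_sublist, List.cons_ne_nil, and_true,
        and_false, or_false, false_or, false_and, or_self] at h
      omega
    · intro x hx y hy
      have h1 := (mem_bounds hc hy).2
      simp only [List.mem_cons, List.not_mem_nil, or_false] at hx
      omega
  · show ∀ a b : ℕ, [a,b,b,a] <+ [m+2,m+3,m+2,m+3] ++ u → a = b
    refine dom4 ?_ hg.2 ?_
    · intro a b h
      simp only [csub, List.sublist_nil, List.nil_sublist, List.cons_ne_nil, and_true,
        and_false, or_false, false_or, false_and, or_self] at h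
      omega
    · intro x hx y hy
      have h1 := (mem_bounds hc hy).2
      simp only [List.mem_cons, List.not_mem_nil, or_false] at hx
      omega

lemma mapA4 {u : List ℕ} (hu : u ∈ S (m+1)) : (m+3)::(m+2)::(m+3)::(m+2)::u ∈ S (m+3) := by
  obtain ⟨hc, hg⟩ := hu
  refine ⟨countA4 m hc, ?_, ?_⟩
  · show ∀ a b c : ℕ, [a,b,c] <+ [m+3,m+2,m+3,m+2] ++ u → a < c → b = a ∨ b = c
    refine dom3 ?_ hg.1 ?_
    · intro a b c h hac
      simp only [csub, List.sublist_nil, List.nil_sublist, List.cons_ne_nil, and_true,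
        and_false, or_false, false_or, false_and, or_self] at h
      omega
    · intro x hx y hy
      have h1 := (mem_bounds hc hy).2
      simp only [List.mem_cons, List.not_mem_nil, or_false] at hx
      omega
  · show ∀ a b : ℕ, [a,b,b,a] <+ [m+3,m+2,m+3,m+2] ++ u → a = b
    refine dom4 ?_ hg.2 ?_
    · intro a b h
      simp only [csub, List.sublist_nil, List.nil_sublist, List.cons_ne_nil, and_true,
        and_false, or_false, false_or, false_and, or_self] at h
      omega
    · intro x hx y hy
      have h1 := (mem_bounds hc hy).2
      simp only [List.mem_cons, List.not_mem_nil, or_false] at hx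
      omega

lemma mapA5 {u : List ℕ} (hu : (m+1)::u ∈ S (m+1)) :
    (m+3)::(m+2)::(m+3)::(m+1)::(m+2)::u ∈ S (m+3) := by
  obtain ⟨hc, hg⟩ := hu
  have hgu : Good u := good_mono (List.sublist_cons_self _ _) hg
  have hyu : ∀ y ∈ u, y ≤ m + 1 := by
    intro y hy
    exact (mem_bounds hc (List.mem_cons_of_mem _ hy)).2
  refine ⟨countA5 m hc, ?_, ?_⟩
  · show ∀ a b c : ℕ, [a,b,c] <+ [m+3,m+2,m+3,m+1,m+2] ++ u → a < c → b = a ∨ b = c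
    refine dom3 ?_ hgu.1 ?_
    · intro a b c h hac
      simp only [csub, List.sublist_nil, List.nil_sublist, List.cons_ne_nil, and_true,
        and_false, or_false, false_or, false_and, or_self] at h
      omega
    · intro x hx y hy
      have h1 := hyu y hy
      simp only [List.mem_cons, List.not_mem_nil, or_false] at hx
      omega
  · show ∀ a b : ℕ, [a,b,b,a] <+ [m+3,m+2,m+3,m+1,m+2] ++ u → a = b
    intro a b hs
    rw [List.sublist_append_iff] at hs
    obtain ⟨t1, t2, heq, h1, h2⟩ := hs
    rcases t1 with _ | ⟨p, _ | ⟨q, _ | ⟨r, _ | ⟨s, rest⟩⟩⟩⟩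
    · rw [List.nil_append] at heq
      exact hgu.2 a b (heq ▸ h2)
    · -- t1 = [a], t2 = [b,b,a] ⊆ u
      simp only [List.cons_append, List.nil_append, List.cons.injEq] at heq
      obtain ⟨rfl, heq2⟩ := heq
      subst heq2
      have hau : a ∈ u := h2.subset (by simp)
      have haP : m + 1 ≤ a := by
        have := h1.subset (List.mem_cons_self (a := a))
        simp only [List.mem_cons, List.not_mem_nil, or_false] at this
        omega
      have ha : a = m + 1 := le_antisymm (hyu a hau) haP
      subst ha
      exact hg.2 (m+1) b (h2.cons₂ (m+1))
    · simp only [List.cons_append, List.nil_append, List.cons.injEq] at heq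
      obtain ⟨rfl, rfl, heq2⟩ := heq
      subst heq2
      have hau : a ∈ u := h2.subset (by simp)
      have hbu : b ∈ u := h2.subset (by simp)
      have haP : m + 1 ≤ a := by
        have := h1.subset (List.mem_cons_self (a := a))
        simp only [List.mem_cons, List.not_mem_nil, or_false] at this
        omega
      have hbP : m + 1 ≤ b := by
        have := h1.subset (show b ∈ [a,b] by simp)
        simp only [List.mem_cons, List.not_mem_nil, or_false] at this
        omega
      have := hyu a hau
      have := hyu b hbu
      omega
    · simp only [List.cons_append, List.nil_append, List.cons.injEq] at heq
      obtain ⟨rfl, rfl, rfl, heq2⟩ := heq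
      subst heq2
      have hau : a ∈ u := h2.subset (by simp)
      have ha : a ≤ m + 1 := hyu a hau
      exfalso
      simp only [csub, List.sublist_nil, List.nil_sublist, List.cons_ne_nil, and_true,
        and_false, or_false, false_or, false_and, or_self] at h1
      omega
    · rcases rest with _ | ⟨x, rest⟩
      · simp only [List.cons_append, List.nil_append, List.cons.injEq] at heq
        obtain ⟨rfl, rfl, rfl, rfl, -⟩ := heq
        simp only [csub, List.sublist_nil, List.nil_sublist, List.cons_ne_nil, and_true,
          and_false, or_false, false_or, false_and, or_self] at h1
        omega
      · simp at heq

end Maps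


lemma mem_of_count_ne_zero {x : ℕ} {l : List ℕ} (h : l.count x ≠ 0) : x ∈ l := by
  by_contra hc
  exact h (List.count_eq_zero.2 hc)

lemma trip_contra {w1 : List ℕ} {a y z : ℕ} (hg : Good (a::w1)) (hy : y ∈ w1) (hz : z ∈ w1)
    (hyz : y ≠ z) (hay : a < y) (haz : a < z) : False := by
  rcases pair_sublist hy hz hyz with h | h
  · rcases hg.1 a y z (h.cons₂ a) haz with h' | h' <;> omega
  · rcases hg.1 a z y (h.cons₂ a) hay with h' | h' <;> omega

lemma classify (m : ℕ) {w : List ℕ} (hw : w ∈ S (m+3)) :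
    (∃ u ∈ S (m+2), w = (m+3)::(m+3)::u) ∨
    (∃ u ∈ S (m+1), w = (m+2)::(m+2)::(m+3)::(m+3)::u) ∨
    (∃ u ∈ S (m+1), w = (m+2)::(m+3)::(m+2)::(m+3)::u) ∨
    (∃ u ∈ S (m+1), w = (m+3)::(m+2)::(m+3)::(m+2)::u) ∨
    (∃ u, (m+1)::u ∈ S (m+1) ∧ w = (m+3)::(m+2)::(m+3)::(m+1)::(m+2)::u) := by
  obtain ⟨hc, hg⟩ := hw
  rcases w with _ | ⟨a, w1⟩
  · exfalso; have := hc (m+3); simp only [List.count_nil] at this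
    split_ifs at this <;> omega
  -- first letter is m+2 or m+3
  have ha : a = m+2 ∨ a = m+3 := by
    by_contra hcon
    push_neg at hcon
    have hble : a ≤ m+1 := by
      have := (mem_bounds hc List.mem_cons_self).2; omega
    have h3 : w1.count (m+3) ≠ 0 := by
      have := hc (m+3); simp only [List.count_cons, beq_iff_eq] at this
      split_ifs at this <;> omega
    have h2 : w1.count (m+2) ≠ 0 := by
      have := hc (m+2); simp only [List.count_cons, beq_iff_eq] at this
      split_ifs at this <;> omega
    exact trip_contra hg (mem_of_count_ne_zero h2) (mem_of_count_ne_zero h3)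
      (by omega) (by omega) (by omega)
  rcases ha with rfl | rfl
  · -- w starts with m+2 ; second letter is m+2 or m+3
    have hne : w1 ≠ [] := by
      intro h; subst h
      have := hc (m+3); simp only [List.count_cons, List.count_nil, beq_iff_eq] at this
      split_ifs at this <;> omega
    rcases w1 with _ | ⟨b, w2⟩
    · exact absurd rfl hne
    have hgw1 : Good (b :: w2) := good_mono (List.sublist_cons_self _ _) hg
    have hb : b = m+2 ∨ b = m+3 := by
      by_contra hcon
      push_neg at hcon
      have hble : b ≤ m+1 := by
        have := (mem_bounds hc (x := b) (by simp)).2; omega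
      have h3 : w2.count (m+3) ≠ 0 := by
        have := hc (m+3); simp only [List.count_cons, beq_iff_eq] at this
        split_ifs at this <;> omega
      have h2 : w2.count (m+2) ≠ 0 := by
        have := hc (m+2); simp only [List.count_cons, beq_iff_eq] at this
        split_ifs at this <;> omega
      exact trip_contra hgw1 (mem_of_count_ne_zero h2) (mem_of_count_ne_zero h3)
        (by omega) (by omega) (by omega)
    rcases hb with rfl | rfl
    · -- w = (m+2)(m+2) ... : next two letters must be m+3
      have hne2 : w2 ≠ [] := by
        intro h; subst h
        have := hc (m+3); simp only [List.count_cons, List.count_nil, beq_iff_eq] at this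
        split_ifs at this <;> omega
      rcases w2 with _ | ⟨x, w3⟩
      · exact absurd rfl hne2
      have hx : x = m+3 := by
        by_contra hxne
        have hxle : x ≤ m+1 := by
          have hb := (mem_bounds hc (x := x) (by simp)).2
          have hxne2 : x ≠ m+2 := by
            intro h; subst h
            have := hc (m+2); simp only [List.count_cons, beq_iff_eq] at this
            split_ifs at this <;> omega
          omega
        have h3 : w3.count (m+3) ≠ 0 := by
          have := hc (m+3); simp only [List.count_cons, beq_iff_eq] at this
          split_ifs at this <;> omega
        have hsub : [m+2, x, m+3] <+ (m+2)::(m+2)::x::w3 := by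
          have : [x, m+3] <+ x :: w3 :=
            (List.singleton_sublist.2 (mem_of_count_ne_zero h3)).cons₂ x
          exact (this.cons (m+2)).cons₂ (m+2)
        rcases hg.1 (m+2) x (m+3) hsub (by omega) with h' | h' <;> omega
      subst hx
      have hne3 : w3 ≠ [] := by
        intro h; subst h
        have := hc (m+3); simp only [List.count_cons, List.count_nil, beq_iff_eq] at this
        split_ifs at this <;> omega
      rcases w3 with _ | ⟨y, w4⟩
      · exact absurd rfl hne3
      have hy : y = m+3 := by
        by_contra hyne
        have hyle : y ≤ m+1 := by
          have hb := (mem_bounds hc (x := y) (by simp)).2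
          have hyne2 : y ≠ m+2 := by
            intro h; subst h
            have := hc (m+2); simp only [List.count_cons, beq_iff_eq] at this
            split_ifs at this <;> omega
          omega
        have h3 : w4.count (m+3) ≠ 0 := by
          have := hc (m+3); simp only [List.count_cons, beq_iff_eq] at this
          split_ifs at this <;> omega
        have hsub : [m+2, y, m+3] <+ (m+2)::(m+2)::(m+3)::y::w4 := by
          have : [y, m+3] <+ y :: w4 :=
            (List.singleton_sublist.2 (mem_of_count_ne_zero h3)).cons₂ y
          exact (((this.cons (m+3)).cons (m+2)).cons₂ (m+2))
        rcases hg.1 (m+2) y (m+3) hsub (by omega) with h' | h' <;> omega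
      subst hy
      refine Or.inr (Or.inl ⟨w4, ⟨?_, ?_⟩, rfl⟩)
      · intro i
        have := hc i; simp only [List.count_cons, beq_iff_eq] at this
        split_ifs at this ⊢ <;> omega
      · exact good_mono (List.sublist_append_right [m+2,m+2,m+3,m+3] _) hg
    · -- w = (m+2)(m+3) ... : must be (m+2)(m+3)(m+2)(m+3)
      have hne2 : w2 ≠ [] := by
        intro h; subst h
        have := hc (m+3); simp only [List.count_cons, List.count_nil, beq_iff_eq] at this
        split_ifs at this <;> omega
      rcases w2 with _ | ⟨x, w3⟩
      · exact absurd rfl hne2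
      have hgw2 : Good (x :: w3) := good_mono ((List.sublist_cons_self _ _).trans
        (List.sublist_cons_self _ _)) hg
      have hx : x = m+2 := by
        by_contra hxne
        by_cases hx3 : x = m+3
        · subst hx3
          have h2 : w3.count (m+2) ≠ 0 := by
            have := hc (m+2); simp only [List.count_cons, beq_iff_eq] at this
            split_ifs at this <;> omega
          have hsub : [m+2, m+3, m+3, m+2] <+ (m+2)::(m+3)::(m+3)::w3 :=
            ((List.singleton_sublist.2 (mem_of_count_ne_zero h2)).cons₂ (m+3)).cons₂ (m+3)
              |>.cons₂ (m+2)
          have := hg.2 (m+2) (m+3) hsub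
          omega
        · have hxle : x ≤ m+1 := by
            have := (mem_bounds hc (x := x) (by simp)).2; omega
          have h3 : w3.count (m+3) ≠ 0 := by
            have := hc (m+3); simp only [List.count_cons, beq_iff_eq] at this
            split_ifs at this <;> omega
          have h2 : w3.count (m+2) ≠ 0 := by
            have := hc (m+2); simp only [List.count_cons, beq_iff_eq] at this
            split_ifs at this <;> omega
          exact trip_contra hgw2 (mem_of_count_ne_zero h2) (mem_of_count_ne_zero h3)
            (by omega) (by omega) (by omega)
      subst hx
      have hne3 : w3 ≠ [] := by
        intro h; subst h
        have := hc (m+3); simp only [List.count_cons, List.count_nil, beq_iff_eq] at this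
        split_ifs at this <;> omega
      rcases w3 with _ | ⟨y, w4⟩
      · exact absurd rfl hne3
      have hy : y = m+3 := by
        by_contra hyne
        have hyle : y ≤ m+1 := by
          have hb := (mem_bounds hc (x := y) (by simp)).2
          have hyne2 : y ≠ m+2 := by
            intro h; subst h
            have := hc (m+2); simp only [List.count_cons, beq_iff_eq] at this
            split_ifs at this <;> omega
          omega
        have h3 : w4.count (m+3) ≠ 0 := by
          have := hc (m+3); simp only [List.count_cons, beq_iff_eq] at this
          split_ifs at this <;> omega
        have hsub : [m+2, y, m+3] <+ (m+2)::(m+3)::(m+2)::y::w4 := by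
          have : [y, m+3] <+ y :: w4 :=
            (List.singleton_sublist.2 (mem_of_count_ne_zero h3)).cons₂ y
          exact ((this.cons₂ (m+2)).cons (m+3)).cons (m+2)
        rcases hg.1 (m+2) y (m+3) hsub (by omega) with h' | h' <;> omega
      subst hy
      refine Or.inr (Or.inr (Or.inl ⟨w4, ⟨?_, ?_⟩, rfl⟩))
      · intro i
        have := hc i; simp only [List.count_cons, beq_iff_eq] at this
        split_ifs at this ⊢ <;> omega
      · exact good_mono (List.sublist_append_right [m+2,m+3,m+2,m+3] _) hg
  · -- w starts with m+3
    have hne : w1 ≠ [] := by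
      intro h; subst h
      have := hc (m+3); simp only [List.count_cons, List.count_nil, beq_iff_eq] at this
      split_ifs at this <;> omega
    rcases w1 with _ | ⟨b, w2⟩
    · exact absurd rfl hne
    have hgw1 : Good (b :: w2) := good_mono (List.sublist_cons_self _ _) hg
    have hb : b = m+2 ∨ b = m+3 := by
      by_contra hcon
      push_neg at hcon
      have hble : b ≤ m+1 := by
        have := (mem_bounds hc (x := b) (by simp)).2; omega
      have h3 : w2.count (m+3) ≠ 0 := by
        have := hc (m+3); simp only [List.count_cons, beq_iff_eq] at this
        split_ifs at this <;> omega
      have h2 : w2.count (m+2) ≠ 0 := by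
        have := hc (m+2); simp only [List.count_cons, beq_iff_eq] at this
        split_ifs at this <;> omega
      exact trip_contra hgw1 (mem_of_count_ne_zero h2) (mem_of_count_ne_zero h3)
        (by omega) (by omega) (by omega)
    rcases hb with rfl | rfl
    swap
    · -- w = (m+3)(m+3) :: w2
      refine Or.inl ⟨w2, ⟨?_, ?_⟩, rfl⟩
      · intro i
        have := hc i; simp only [List.count_cons, beq_iff_eq] at this
        split_ifs at this ⊢ <;> omega
      · exact good_mono (List.sublist_append_right [m+3,m+3] _) hg
    · -- w = (m+3)(m+2) :: w2 ; next letter must be m+3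
      have hne2 : w2 ≠ [] := by
        intro h; subst h
        have := hc (m+3); simp only [List.count_cons, List.count_nil, beq_iff_eq] at this
        split_ifs at this <;> omega
      rcases w2 with _ | ⟨x, w3⟩
      · exact absurd rfl hne2
      have hgw2 : Good (x :: w3) := good_mono ((List.sublist_cons_self _ _).trans
        (List.sublist_cons_self _ _)) hg
      have hx : x = m+3 := by
        by_contra hxne
        by_cases hx2 : x = m+2
        · subst hx2
          have h3 : w3.count (m+3) ≠ 0 := by
            have := hc (m+3); simp only [List.count_cons, beq_iff_eq] at this
            split_ifs at this <;> omega
          have hsub : [m+3, m+2, m+2, m+3] <+ (m+3)::(m+2)::(m+2)::w3 :=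
            ((List.singleton_sublist.2 (mem_of_count_ne_zero h3)).cons₂ (m+2)).cons₂ (m+2)
              |>.cons₂ (m+3)
          have := hg.2 (m+3) (m+2) hsub
          omega
        · have hxle : x ≤ m+1 := by
            have := (mem_bounds hc (x := x) (by simp)).2; omega
          have h3 : w3.count (m+3) ≠ 0 := by
            have := hc (m+3); simp only [List.count_cons, beq_iff_eq] at this
            split_ifs at this <;> omega
          have h2 : w3.count (m+2) ≠ 0 := by
            have := hc (m+2); simp only [List.count_cons, beq_iff_eq] at this
            split_ifs at this <;> omega
          exact trip_contra hgw2 (mem_of_count_ne_zero h2) (mem_of_count_ne_zero h3)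
            (by omega) (by omega) (by omega)
      subst hx
      -- w = (m+3)(m+2)(m+3) :: w3
      have hne3 : w3 ≠ [] := by
        intro h; subst h
        have := hc (m+2); simp only [List.count_cons, List.count_nil, beq_iff_eq] at this
        split_ifs at this <;> omega
      rcases w3 with _ | ⟨d, w4⟩
      · exact absurd rfl hne3
      have hgw3 : Good (d :: w4) := good_mono (((List.sublist_cons_self _ _).trans
        (List.sublist_cons_self _ _)).trans (List.sublist_cons_self _ _)) hg
      by_cases hd2 : d = m+2
      · subst hd2
        refine Or.inr (Or.inr (Or.inr (Or.inl ⟨w4, ⟨?_, ?_⟩, rfl⟩)))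
        · intro i
          have := hc i; simp only [List.count_cons, beq_iff_eq] at this
          split_ifs at this ⊢ <;> omega
        · exact good_mono (List.sublist_append_right [m+3,m+2,m+3,m+2] _) hg
      · -- d ≤ m+1 ; must have d = m+1
        have hd3 : d ≠ m+3 := by
          intro h; subst h
          have := hc (m+3); simp only [List.count_cons, beq_iff_eq] at this
          split_ifs at this <;> omega
        have hdle : d ≤ m+1 := by
          have := (mem_bounds hc (x := d) (by simp)).2; omega
        have h2w4 : w4.count (m+2) ≠ 0 := by
          have := hc (m+2); simp only [List.count_cons, beq_iff_eq] at this
          split_ifs at this <;> omega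
        have hd1 : d = m+1 := by
          by_contra hdne
          have h1w4 : w4.count (m+1) ≠ 0 := by
            have := hc (m+1); simp only [List.count_cons, beq_iff_eq] at this
            split_ifs at this <;> omega
          exact trip_contra hgw3 (mem_of_count_ne_zero h1w4) (mem_of_count_ne_zero h2w4)
            (by omega) (by omega) (by omega)
        subst hd1
        -- w = (m+3)(m+2)(m+3)(m+1) :: w4 ; next letter must be m+2
        have hne4 : w4 ≠ [] := by
          intro h; subst h; simp at h2w4
        rcases w4 with _ | ⟨e, w5⟩
        · exact absurd rfl hne4
        have he : e = m+2 := by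
          by_contra hene
          have hele : e ≤ m+1 := by
            have he3 : e ≠ m+3 := by
              intro h; subst h
              have := hc (m+3); simp only [List.count_cons, beq_iff_eq] at this
              split_ifs at this <;> omega
            have := (mem_bounds hc (x := e) (by simp)).2; omega
          have h2w5 : w5.count (m+2) ≠ 0 := by
            have := hc (m+2); simp only [List.count_cons, beq_iff_eq] at this
            split_ifs at this <;> omega
          by_cases he1 : e = m+1
          · subst he1
            -- quad (m+2)(m+1)(m+1)(m+2)
            have hsub : [m+2, m+1, m+1, m+2] <+
                (m+3)::(m+2)::(m+3)::(m+1)::(m+1)::w5 := by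
              have : [m+1, m+1, m+2] <+ (m+1)::(m+1)::w5 :=
                ((List.singleton_sublist.2 (mem_of_count_ne_zero h2w5)).cons₂ (m+1)).cons₂ (m+1)
              exact ((this.cons (m+3)).cons₂ (m+2)).cons (m+3)
            have := hg.2 (m+2) (m+1) hsub
            omega
          · -- e < m+1 : triple (m+1) e (m+2)
            have hsub : [m+1, e, m+2] <+ (m+3)::(m+2)::(m+3)::(m+1)::e::w5 := by
              have : [e, m+2] <+ e :: w5 :=
                (List.singleton_sublist.2 (mem_of_count_ne_zero h2w5)).cons₂ e
              exact (((this.cons₂ (m+1)).cons (m+3)).cons (m+2)).cons (m+3)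
            rcases hg.1 (m+1) e (m+2) hsub (by omega) with h' | h' <;> omega
        subst he
        -- w = (m+3)(m+2)(m+3)(m+1)(m+2) :: w5
        refine Or.inr (Or.inr (Or.inr (Or.inr ⟨w5, ⟨?_, ?_⟩, rfl⟩)))
        · intro i
          have := hc i; simp only [List.count_cons, beq_iff_eq] at this ⊢
          split_ifs at this ⊢ <;> omega
        · refine good_mono ?_ hg
          have : (m+1)::w5 <+ (m+1)::(m+2)::w5 :=
            (List.sublist_cons_self _ _).cons₂ (m+1)
          exact ((this.cons (m+3)).cons (m+2)).cons (m+3)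


lemma S_finite (n : ℕ) : (S n).Finite := by
  apply Set.Finite.subset ((List.range' 1 n ++ List.range' 1 n).permutations.toFinset.finite_toSet)
  intro w hw
  simp only [Finset.mem_coe, List.mem_toFinset, List.mem_permutations]
  rw [List.perm_iff_count]
  intro a
  rw [hw.1 a, List.count_append]
  by_cases hmem : a ∈ List.range' 1 n
  · have h1 : List.count a (List.range' 1 n) = 1 :=
      List.count_eq_one_of_mem (List.nodup_range' (s := 1) (n := n)) hmem
    rw [h1]
    rw [List.mem_range'] at hmem
    rw [if_pos (by obtain ⟨i, hi, rfl⟩ := hmem; omega)]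
  · have h1 : List.count a (List.range' 1 n) = 0 := List.count_eq_zero_of_not_mem hmem
    have hcond : ¬ (1 ≤ a ∧ a ≤ n) := by
      rintro ⟨ha1, ha2⟩
      exact hmem (by rw [List.mem_range']; exact ⟨a - 1, by omega, by omega⟩)
    rw [h1, if_neg hcond]

lemma E_finite (n : ℕ) : (E n).Finite :=
  (S_finite n).subset (fun w hw => hw.1)

lemma good_small {w : List ℕ} (h : w.length ≤ 2) : Good w := by
  constructor
  · intro a b c hs _
    have := hs.length_le
    simp at this
    omega
  · intro a b hs
    have := hs.length_le
    simp at this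
    omega

lemma S_zero : S 0 = {([] : List ℕ)} := by
  ext w
  simp only [S, Set.mem_setOf_eq, Set.mem_singleton_iff]
  constructor
  · rintro ⟨hc, -⟩
    rcases w with _ | ⟨a, w1⟩
    · rfl
    · exfalso
      have := hc a
      rw [if_neg (by omega)] at this
      simp [List.count_cons] at this
  · rintro rfl
    refine ⟨?_, good_small (by simp)⟩
    intro i
    rw [if_neg (by omega)]
    simp

lemma S_one : S 1 = {([1,1] : List ℕ)} := by
  ext w
  simp only [S, Set.mem_setOf_eq, Set.mem_singleton_iff]
  constructor
  · rintro ⟨hc, -⟩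
    have hperm : w ~ [1,1] := by
      rw [List.perm_iff_count]
      intro a
      rw [hc a]
      rcases eq_or_ne a 1 with rfl | ha
      · simp
      · rw [if_neg (by omega)]
        simp only [List.count_cons, List.count_nil, beq_iff_eq]
        split_ifs <;> omega
    have := List.perm_replicate (n := 2) (a := (1:ℕ)) |>.1 (by simpa using hperm)
    simpa using this
  · rintro rfl
    refine ⟨?_, good_small (by simp)⟩
    intro i
    simp only [List.count_cons, List.count_nil, beq_iff_eq]
    split_ifs <;> omega

lemma good_concrete (l : List ℕ) (h3 : ∀ a b c : ℕ, [a,b,c] <+ l → a < c → b = a ∨ b = c)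
    (h4 : ∀ a b : ℕ, [a,b,b,a] <+ l → a = b) : Good l := ⟨h3, h4⟩

lemma S_two : S 2 = {[1,1,2,2], [1,2,1,2], [2,1,2,1], ([2,2,1,1] : List ℕ)} := by
  ext w
  simp only [S, Set.mem_setOf_eq, Set.mem_insert_iff, Set.mem_singleton_iff]
  constructor
  · rintro ⟨hc, hg⟩
    have hperm : w ~ [1,1,2,2] := by
      rw [List.perm_iff_count]
      intro a
      rw [hc a]
      rcases eq_or_ne a 1 with rfl | ha1
      · simp
      rcases eq_or_ne a 2 with rfl | ha2
      · simp
      · rw [if_neg (by omega)]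
        simp only [List.count_cons, List.count_nil, beq_iff_eq]
        split_ifs <;> omega
    have hlen : w.length = 4 := by rw [hperm.length_eq]; rfl
    obtain ⟨a, b, c, d, rfl⟩ := length_four_cases hlen
    have h1 : List.count 1 [a,b,c,d] = 2 := by rw [hc 1]; norm_num
    have h2 : List.count 2 [a,b,c,d] = 2 := by rw [hc 2]; norm_num
    have hb1 : 1 ≤ a ∧ a ≤ 2 := mem_bounds hc (by simp)
    have hb2 : 1 ≤ b ∧ b ≤ 2 := mem_bounds hc (by simp)
    have hb3 : 1 ≤ c ∧ c ≤ 2 := mem_bounds hc (by simp)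
    have hb4 : 1 ≤ d ∧ d ≤ 2 := mem_bounds hc (by simp)
    obtain ⟨hb1a, hb1b⟩ := hb1
    obtain ⟨hb2a, hb2b⟩ := hb2
    obtain ⟨hb3a, hb3b⟩ := hb3
    obtain ⟨hb4a, hb4b⟩ := hb4
    simp only [List.count_cons, List.count_nil, beq_iff_eq] at h1 h2
    interval_cases a <;> interval_cases b <;> interval_cases c <;> interval_cases d <;>
      first
        | (exfalso; have := hg.2 1 2 (by decide); omega)
        | (exfalso; have := hg.2 2 1 (by decide); omega)
        | simp_all
  · intro hw
    rcases hw with rfl | rfl | rfl | rfl <;>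
      refine ⟨?_, good_concrete _ ?_ ?_⟩ <;>
      first
        | (intro i
           simp only [List.count_cons, List.count_nil, beq_iff_eq]
           split_ifs <;> omega)
        | (intro a b c h hac
           simp only [csub, List.sublist_nil, List.nil_sublist, List.cons_ne_nil, and_true,
             and_false, or_false, false_or, false_and, or_self] at h
           omega)
        | (intro a b h
           simp only [csub, List.sublist_nil, List.nil_sublist, List.cons_ne_nil, and_true,
             and_false, or_false, false_or, false_and, or_self] at h
           omega)

lemma E_one : E 1 = {([1,1] : List ℕ)} := by
  ext w
  simp only [E, Set.mem_setOf_eq, Set.mem_singleton_iff, S_one]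
  constructor
  · rintro ⟨rfl, -⟩; rfl
  · rintro rfl; exact ⟨rfl, ⟨[1], rfl⟩⟩

lemma E_two : E 2 = {[2,1,2,1], ([2,2,1,1] : List ℕ)} := by
  ext w
  simp only [E, Set.mem_setOf_eq, Set.mem_insert_iff, Set.mem_singleton_iff, S_two]
  constructor
  · rintro ⟨(rfl | rfl | rfl | rfl), ⟨v, hv⟩⟩ <;> simp_all
  · rintro (rfl | rfl)
    · exact ⟨by simp, ⟨[1,2,1], rfl⟩⟩
    · exact ⟨by simp, ⟨[2,1,1], rfl⟩⟩


/-- words u such that (k)::u is in S k -/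
def T (k : ℕ) : Set (List ℕ) := {u | k :: u ∈ S k}

lemma E_eq_image (k : ℕ) : E k = (fun u => k :: u) '' T k := by
  ext w
  constructor
  · rintro ⟨hS, v, rfl⟩
    exact ⟨v, hS, rfl⟩
  · rintro ⟨u, hu, rfl⟩
    exact ⟨hu, u, rfl⟩

lemma consInj (k : ℕ) : Function.Injective (fun u : List ℕ => k :: u) :=
  fun u v h => by simpa using h

lemma ncard_E_eq_T (k : ℕ) : (E k).ncard = (T k).ncard := by
  rw [E_eq_image, Set.ncard_image_of_injective _ (consInj k)]

lemma T_finite (k : ℕ) : (T k).Finite :=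
  Set.Finite.of_finite_image (E_eq_image k ▸ E_finite k) ((consInj k).injOn)

lemma master_S (m : ℕ) : S (m+3) =
    (fun u => (m+3)::(m+3)::u) '' S (m+2) ∪
    (fun u => (m+2)::(m+2)::(m+3)::(m+3)::u) '' S (m+1) ∪
    (fun u => (m+2)::(m+3)::(m+2)::(m+3)::u) '' S (m+1) ∪
    (fun u => (m+3)::(m+2)::(m+3)::(m+2)::u) '' S (m+1) ∪
    (fun u => (m+3)::(m+2)::(m+3)::(m+1)::(m+2)::u) '' T (m+1) := by
  ext w
  constructor
  · intro hw
    rcases classify m hw with ⟨u, hu, rfl⟩ | ⟨u, hu, rfl⟩ | ⟨u, hu, rfl⟩ | ⟨u, hu, rfl⟩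
      | ⟨u, hu, rfl⟩
    · exact Or.inl (Or.inl (Or.inl (Or.inl ⟨u, hu, rfl⟩)))
    · exact Or.inl (Or.inl (Or.inl (Or.inr ⟨u, hu, rfl⟩)))
    · exact Or.inl (Or.inl (Or.inr ⟨u, hu, rfl⟩))
    · exact Or.inl (Or.inr ⟨u, hu, rfl⟩)
    · exact Or.inr ⟨u, hu, rfl⟩
  · rintro ((((⟨u, hu, rfl⟩ | ⟨u, hu, rfl⟩) | ⟨u, hu, rfl⟩) | ⟨u, hu, rfl⟩) | ⟨u, hu, rfl⟩)
    · exact mapA1 m hu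
    · exact mapA2 m hu
    · exact mapA3 m hu
    · exact mapA4 m hu
    · exact mapA5 m hu

lemma master_E (m : ℕ) : E (m+3) =
    (fun u => (m+3)::(m+3)::u) '' S (m+2) ∪
    (fun u => (m+3)::(m+2)::(m+3)::(m+2)::u) '' S (m+1) ∪
    (fun u => (m+3)::(m+2)::(m+3)::(m+1)::(m+2)::u) '' T (m+1) := by
  ext w
  constructor
  · rintro ⟨hS, v, rfl⟩
    rcases classify m hS with ⟨u, hu, heq⟩ | ⟨u, hu, heq⟩ | ⟨u, hu, heq⟩ | ⟨u, hu, heq⟩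
      | ⟨u, hu, heq⟩
    · rw [heq]; exact Or.inl (Or.inl ⟨u, hu, rfl⟩)
    · exfalso; simp only [List.cons.injEq] at heq; omega
    · exfalso; simp only [List.cons.injEq] at heq; omega
    · rw [heq]; exact Or.inl (Or.inr ⟨u, hu, rfl⟩)
    · rw [heq]; exact Or.inr ⟨u, hu, rfl⟩
  · rintro ((⟨u, hu, rfl⟩ | ⟨u, hu, rfl⟩) | ⟨u, hu, rfl⟩)
    · exact ⟨mapA1 m hu, _, rfl⟩
    · exact ⟨mapA4 m hu, _, rfl⟩
    · exact ⟨mapA5 m hu, _, rfl⟩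

lemma inj_pre (P : List ℕ) : Function.Injective (fun u : List ℕ => P ++ u) :=
  fun u v h => by simpa using h

lemma card_S_rec (m : ℕ) : (S (m+3)).ncard =
    (S (m+2)).ncard + 3 * (S (m+1)).ncard + (E (m+1)).ncard := by
  have i1 : Function.Injective (fun u : List ℕ => (m+3)::(m+3)::u) :=
    fun u v h => by simpa using h
  have i2 : Function.Injective (fun u : List ℕ => (m+2)::(m+2)::(m+3)::(m+3)::u) :=
    fun u v h => by simpa using h
  have i3 : Function.Injective (fun u : List ℕ => (m+2)::(m+3)::(m+2)::(m+3)::u) :=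
    fun u v h => by simpa using h
  have i4 : Function.Injective (fun u : List ℕ => (m+3)::(m+2)::(m+3)::(m+2)::u) :=
    fun u v h => by simpa using h
  have i5 : Function.Injective (fun u : List ℕ => (m+3)::(m+2)::(m+3)::(m+1)::(m+2)::u) :=
    fun u v h => by simpa using h
  have f1 := (S_finite (m+2)).image (fun u => (m+3)::(m+3)::u)
  have f2 := (S_finite (m+1)).image (fun u => (m+2)::(m+2)::(m+3)::(m+3)::u)
  have f3 := (S_finite (m+1)).image (fun u => (m+2)::(m+3)::(m+2)::(m+3)::u)
  have f4 := (S_finite (m+1)).image (fun u => (m+3)::(m+2)::(m+3)::(m+2)::u)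
  have f5 := (T_finite (m+1)).image (fun u => (m+3)::(m+2)::(m+3)::(m+1)::(m+2)::u)
  have d12 : Disjoint ((fun u : List ℕ => (m+3)::(m+3)::u) '' S (m+2))
      ((fun u : List ℕ => (m+2)::(m+2)::(m+3)::(m+3)::u) '' S (m+1)) := by
    rw [Set.disjoint_left]; rintro x ⟨u, hu, rfl⟩ ⟨u', hu', heq⟩
    simp only [List.cons.injEq] at heq; omega
  have d13 : Disjoint ((fun u : List ℕ => (m+3)::(m+3)::u) '' S (m+2))
      ((fun u : List ℕ => (m+2)::(m+3)::(m+2)::(m+3)::u) '' S (m+1)) := by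
    rw [Set.disjoint_left]; rintro x ⟨u, hu, rfl⟩ ⟨u', hu', heq⟩
    simp only [List.cons.injEq] at heq; omega
  have d14 : Disjoint ((fun u : List ℕ => (m+3)::(m+3)::u) '' S (m+2))
      ((fun u : List ℕ => (m+3)::(m+2)::(m+3)::(m+2)::u) '' S (m+1)) := by
    rw [Set.disjoint_left]; rintro x ⟨u, hu, rfl⟩ ⟨u', hu', heq⟩
    simp only [List.cons.injEq] at heq; omega
  have d15 : Disjoint ((fun u : List ℕ => (m+3)::(m+3)::u) '' S (m+2))
      ((fun u : List ℕ => (m+3)::(m+2)::(m+3)::(m+1)::(m+2)::u) '' T (m+1)) := by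
    rw [Set.disjoint_left]; rintro x ⟨u, hu, rfl⟩ ⟨u', hu', heq⟩
    simp only [List.cons.injEq] at heq; omega
  have d23 : Disjoint ((fun u : List ℕ => (m+2)::(m+2)::(m+3)::(m+3)::u) '' S (m+1))
      ((fun u : List ℕ => (m+2)::(m+3)::(m+2)::(m+3)::u) '' S (m+1)) := by
    rw [Set.disjoint_left]; rintro x ⟨u, hu, rfl⟩ ⟨u', hu', heq⟩
    simp only [List.cons.injEq] at heq; omega
  have d24 : Disjoint ((fun u : List ℕ => (m+2)::(m+2)::(m+3)::(m+3)::u) '' S (m+1))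
      ((fun u : List ℕ => (m+3)::(m+2)::(m+3)::(m+2)::u) '' S (m+1)) := by
    rw [Set.disjoint_left]; rintro x ⟨u, hu, rfl⟩ ⟨u', hu', heq⟩
    simp only [List.cons.injEq] at heq; omega
  have d25 : Disjoint ((fun u : List ℕ => (m+2)::(m+2)::(m+3)::(m+3)::u) '' S (m+1))
      ((fun u : List ℕ => (m+3)::(m+2)::(m+3)::(m+1)::(m+2)::u) '' T (m+1)) := by
    rw [Set.disjoint_left]; rintro x ⟨u, hu, rfl⟩ ⟨u', hu', heq⟩
    simp only [List.cons.injEq] at heq; omega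
  have d34 : Disjoint ((fun u : List ℕ => (m+2)::(m+3)::(m+2)::(m+3)::u) '' S (m+1))
      ((fun u : List ℕ => (m+3)::(m+2)::(m+3)::(m+2)::u) '' S (m+1)) := by
    rw [Set.disjoint_left]; rintro x ⟨u, hu, rfl⟩ ⟨u', hu', heq⟩
    simp only [List.cons.injEq] at heq; omega
  have d35 : Disjoint ((fun u : List ℕ => (m+2)::(m+3)::(m+2)::(m+3)::u) '' S (m+1))
      ((fun u : List ℕ => (m+3)::(m+2)::(m+3)::(m+1)::(m+2)::u) '' T (m+1)) := by
    rw [Set.disjoint_left]; rintro x ⟨u, hu, rfl⟩ ⟨u', hu', heq⟩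
    simp only [List.cons.injEq] at heq; omega
  have d45 : Disjoint ((fun u : List ℕ => (m+3)::(m+2)::(m+3)::(m+2)::u) '' S (m+1))
      ((fun u : List ℕ => (m+3)::(m+2)::(m+3)::(m+1)::(m+2)::u) '' T (m+1)) := by
    rw [Set.disjoint_left]; rintro x ⟨u, hu, rfl⟩ ⟨u', hu', heq⟩
    simp only [List.cons.injEq] at heq; omega
  rw [master_S m]
  rw [Set.ncard_union_eq (by
      rw [Set.disjoint_union_left, Set.disjoint_union_left, Set.disjoint_union_left]
      exact ⟨⟨⟨d15, d25⟩, d35⟩, d45⟩)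
    (((f1.union f2).union f3).union f4) f5]
  rw [Set.ncard_union_eq (by
      rw [Set.disjoint_union_left, Set.disjoint_union_left]
      exact ⟨⟨d14, d24⟩, d34⟩)
    ((f1.union f2).union f3) f4]
  rw [Set.ncard_union_eq (by
      rw [Set.disjoint_union_left]
      exact ⟨d13, d23⟩)
    (f1.union f2) f3]
  rw [Set.ncard_union_eq d12 f1 f2]
  rw [Set.ncard_image_of_injective _ i1, Set.ncard_image_of_injective _ i2,
    Set.ncard_image_of_injective _ i3, Set.ncard_image_of_injective _ i4,
    Set.ncard_image_of_injective _ i5, ncard_E_eq_T]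
  ring

lemma card_E_rec (m : ℕ) : (E (m+3)).ncard =
    (S (m+2)).ncard + (S (m+1)).ncard + (E (m+1)).ncard := by
  have i1 : Function.Injective (fun u : List ℕ => (m+3)::(m+3)::u) :=
    fun u v h => by simpa using h
  have i4 : Function.Injective (fun u : List ℕ => (m+3)::(m+2)::(m+3)::(m+2)::u) :=
    fun u v h => by simpa using h
  have i5 : Function.Injective (fun u : List ℕ => (m+3)::(m+2)::(m+3)::(m+1)::(m+2)::u) :=
    fun u v h => by simpa using h
  have f1 := (S_finite (m+2)).image (fun u => (m+3)::(m+3)::u)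
  have f4 := (S_finite (m+1)).image (fun u => (m+3)::(m+2)::(m+3)::(m+2)::u)
  have f5 := (T_finite (m+1)).image (fun u => (m+3)::(m+2)::(m+3)::(m+1)::(m+2)::u)
  have d14 : Disjoint ((fun u : List ℕ => (m+3)::(m+3)::u) '' S (m+2))
      ((fun u : List ℕ => (m+3)::(m+2)::(m+3)::(m+2)::u) '' S (m+1)) := by
    rw [Set.disjoint_left]; rintro x ⟨u, hu, rfl⟩ ⟨u', hu', heq⟩
    simp only [List.cons.injEq] at heq; omega
  have d15 : Disjoint ((fun u : List ℕ => (m+3)::(m+3)::u) '' S (m+2))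
      ((fun u : List ℕ => (m+3)::(m+2)::(m+3)::(m+1)::(m+2)::u) '' T (m+1)) := by
    rw [Set.disjoint_left]; rintro x ⟨u, hu, rfl⟩ ⟨u', hu', heq⟩
    simp only [List.cons.injEq] at heq; omega
  have d45 : Disjoint ((fun u : List ℕ => (m+3)::(m+2)::(m+3)::(m+2)::u) '' S (m+1))
      ((fun u : List ℕ => (m+3)::(m+2)::(m+3)::(m+1)::(m+2)::u) '' T (m+1)) := by
    rw [Set.disjoint_left]; rintro x ⟨u, hu, rfl⟩ ⟨u', hu', heq⟩
    simp only [List.cons.injEq] at heq; omega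
  rw [master_E m]
  rw [Set.ncard_union_eq (by
      rw [Set.disjoint_union_left]
      exact ⟨d15, d45⟩)
    (f1.union f4) f5]
  rw [Set.ncard_union_eq d14 f1 f4]
  rw [Set.ncard_image_of_injective _ i1, Set.ncard_image_of_injective _ i4,
    Set.ncard_image_of_injective _ i5, ncard_E_eq_T]


theorem nonnesting_avoid_123_132_213_recurrence
    (c : ℕ → ℕ)
    (hc : ∀ n : ℕ, c n = {w : List ℕ | IsNonnesting n w ∧
      Avoids w [1,2,3] ∧ Avoids w [1,3,2] ∧ Avoids w [2,1,3]}.ncard) :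
    c 0 = 1 ∧ c 1 = 1 ∧ c 2 = 4 ∧
      ∀ n : ℕ, 3 ≤ n →
        (c n : ℤ) = 2 * c (n - 1) + 2 * c (n - 2) - 2 * c (n - 3) := by
  have hS : ∀ n, c n = (S n).ncard := fun n => by rw [hc n, S_eq n]
  have c0 : c 0 = 1 := by rw [hS 0, S_zero]; exact Set.ncard_singleton _
  have c1 : c 1 = 1 := by rw [hS 1, S_one]; exact Set.ncard_singleton _
  have c2 : c 2 = 4 := by
    rw [hS 2, S_two]
    rw [Set.ncard_insert_of_notMem (by simp) (((Set.finite_singleton _).insert _).insert _),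
        Set.ncard_insert_of_notMem (by simp) ((Set.finite_singleton _).insert _),
        Set.ncard_insert_of_notMem (by simp) (Set.finite_singleton _),
        Set.ncard_singleton]
  have e1 : (E 1).ncard = 1 := by rw [E_one]; exact Set.ncard_singleton _
  have e2 : (E 2).ncard = 2 := by
    rw [E_two, Set.ncard_insert_of_notMem (by simp) (Set.finite_singleton _),
      Set.ncard_singleton]
  have recS : ∀ m, c (m+3) = c (m+2) + 3 * c (m+1) + (E (m+1)).ncard := fun m => by
    rw [hS, hS, hS]; exact card_S_rec m
  have recE : ∀ m, (E (m+3)).ncard = c (m+2) + c (m+1) + (E (m+1)).ncard := fun m => by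
    rw [hS, hS]; exact card_E_rec m
  have eform : ∀ k, ((E (k+2)).ncard : ℤ) = (c (k+2) : ℤ) - 2 * (c k : ℤ) := by
    intro k
    rcases k with _ | j
    · rw [e2, c2, c0]; norm_num
    · have h1 := recS j
      have h2 := recE j
      have e2' : j + 1 + 2 = j + 3 := by omega
      rw [e2']
      omega
  have main : ∀ n, (c (n+3) : ℤ) = 2 * c (n+2) + 2 * c (n+1) - 2 * c n := by
    intro n
    induction n with
    | zero =>
      have h1 := recS 0
      norm_num at h1 ⊢
      rw [e1] at h1
      omega
    | succ j ih =>
      have h1 := recS (j+1)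
      have h2 := eform j
      have e3' : j + 1 + 3 = j + 4 := by omega
      have e2' : j + 1 + 2 = j + 3 := by omega
      have e1' : j + 1 + 1 = j + 2 := by omega
      rw [e3', e2', e1'] at h1
      rw [e3', e2', e1']
      omega
  refine ⟨c0, c1, c2, ?_⟩
  intro n hn
  obtain ⟨k, rfl⟩ : ∃ k, n = k + 3 := ⟨n - 3, by omega⟩
  have h1 : k + 3 - 1 = k + 2 := by omega
  have h2 : k + 3 - 2 = k + 1 := by omega
  have h3 : k + 3 - 3 = k := by omega
  rw [h1, h2, h3]
  exact main k
end

section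
/- For all n ≥ 2, the number of nonnesting permutations of the multiset {1,1,2,2,…,n,n} that avoid all three patterns 123, 213, and 312 equals n + 2. -/
/-! ### small OrderIsoWord constructors -/

lemma oiw_123 {x y z : ℕ} (h1 : x < y) (h2 : y < z) : OrderIsoWord [x,y,z] [1,2,3] := by
  refine ⟨rfl, ?_⟩
  intro r s hr hs
  simp only [List.length_cons, List.length_nil] at hr hs
  interval_cases r <;> interval_cases s <;> simp_all <;> omega

lemma oiw_213 {x y z : ℕ} (h1 : y < x) (h2 : x < z) : OrderIsoWord [x,y,z] [2,1,3] := by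
  refine ⟨rfl, ?_⟩
  intro r s hr hs
  simp only [List.length_cons, List.length_nil] at hr hs
  interval_cases r <;> interval_cases s <;> simp_all <;> omega

lemma oiw_312 {x y z : ℕ} (h1 : y < z) (h2 : z < x) : OrderIsoWord [x,y,z] [3,1,2] := by
  refine ⟨rfl, ?_⟩
  intro r s hr hs
  simp only [List.length_cons, List.length_nil] at hr hs
  interval_cases r <;> interval_cases s <;> simp_all <;> omega

lemma oiw_1221 {x y : ℕ} (h1 : x < y) : OrderIsoWord [x,y,y,x] [1,2,2,1] := by
  refine ⟨rfl, ?_⟩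
  intro r s hr hs
  simp only [List.length_cons, List.length_nil] at hr hs
  interval_cases r <;> interval_cases s <;> simp_all <;> omega

lemma oiw_2112 {x y : ℕ} (h1 : x < y) : OrderIsoWord [y,x,x,y] [2,1,1,2] := by
  refine ⟨rfl, ?_⟩
  intro r s hr hs
  simp only [List.length_cons, List.length_nil] at hr hs
  interval_cases r <;> interval_cases s <;> simp_all <;> omega

/-! ### destructors -/

lemma length_eq_four' {l : List ℕ} (h : l.length = 4) : ∃ a b c d, l = [a,b,c,d] := by
  match l, h with
  | [a,b,c,d], _ => exact ⟨a,b,c,d,rfl⟩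

lemma oiw_123_dest {t : List ℕ} (h : OrderIsoWord t [1,2,3]) :
    ∃ x y z, t = [x,y,z] ∧ x < y ∧ y < z := by
  obtain ⟨hl, hrel⟩ := h
  obtain ⟨x, y, z, rfl⟩ := List.length_eq_three.1 hl
  exact ⟨x, y, z, rfl, ((hrel 0 1 (by norm_num) (by norm_num)).1).2 (by norm_num),
    ((hrel 1 2 (by norm_num) (by norm_num)).1).2 (by norm_num)⟩

lemma oiw_213_dest {t : List ℕ} (h : OrderIsoWord t [2,1,3]) :
    ∃ x y z, t = [x,y,z] ∧ y < x ∧ x < z := by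
  obtain ⟨hl, hrel⟩ := h
  obtain ⟨x, y, z, rfl⟩ := List.length_eq_three.1 hl
  exact ⟨x, y, z, rfl, ((hrel 1 0 (by norm_num) (by norm_num)).1).2 (by norm_num),
    ((hrel 0 2 (by norm_num) (by norm_num)).1).2 (by norm_num)⟩

lemma oiw_312_dest {t : List ℕ} (h : OrderIsoWord t [3,1,2]) :
    ∃ x y z, t = [x,y,z] ∧ y < z ∧ z < x := by
  obtain ⟨hl, hrel⟩ := h
  obtain ⟨x, y, z, rfl⟩ := List.length_eq_three.1 hl
  exact ⟨x, y, z, rfl, ((hrel 1 2 (by norm_num) (by norm_num)).1).2 (by norm_num),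
    ((hrel 2 0 (by norm_num) (by norm_num)).1).2 (by norm_num)⟩

lemma oiw_1221_dest {t : List ℕ} (h : OrderIsoWord t [1,2,2,1]) :
    ∃ x y, t = [x,y,y,x] ∧ x < y := by
  obtain ⟨hl, hrel⟩ := h
  obtain ⟨x, y, c, d, rfl⟩ := length_eq_four' hl
  have h1 : x < y := ((hrel 0 1 (by norm_num) (by norm_num)).1).2 (by norm_num)
  have h2 : y = c := ((hrel 1 2 (by norm_num) (by norm_num)).2).2 (by norm_num)
  have h3 : x = d := ((hrel 0 3 (by norm_num) (by norm_num)).2).2 (by norm_num)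
  exact ⟨x, y, by simp [h2, h3], h1⟩

lemma oiw_2112_dest {t : List ℕ} (h : OrderIsoWord t [2,1,1,2]) :
    ∃ x y, t = [y,x,x,y] ∧ x < y := by
  obtain ⟨hl, hrel⟩ := h
  obtain ⟨a, x, c, d, rfl⟩ := length_eq_four' hl
  have h1 : x < a := ((hrel 1 0 (by norm_num) (by norm_num)).1).2 (by norm_num)
  have h2 : x = c := ((hrel 1 2 (by norm_num) (by norm_num)).2).2 (by norm_num)
  have h3 : a = d := ((hrel 0 3 (by norm_num) (by norm_num)).2).2 (by norm_num)
  exact ⟨x, a, by simp [h2, h3], h1⟩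

/-! ### generic helpers -/

lemma sublist_pair {t : List ℕ} {a : ℕ} (h : t.Sublist [a,a]) :
    t = [] ∨ t = [a] ∨ t = [a,a] := by
  have := List.mem_sublists.2 h
  fin_cases this <;> simp

lemma contains_mono {v w σ : List ℕ} (h : v.Sublist w) : Contains v σ → Contains w σ := by
  rintro ⟨t, ht, h2⟩; exact ⟨t, ht.trans h, h2⟩

lemma avoids_mono {v w σ : List ℕ} (h : v.Sublist w) : Avoids w σ → Avoids v σ :=
  fun hw hc => hw (contains_mono h hc)

/-! ### strip lemmas : remove a trailing [a,a] of minima -/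

section strip
variable {v : List ℕ} {a : ℕ}

lemma strip_cases {t : List ℕ} (hsub : t.Sublist (v ++ [a,a])) :
    t.Sublist v ∨ (∃ t₁, t = t₁ ++ [a] ∧ t₁.Sublist v) ∨
      (∃ t₁, t = t₁ ++ [a,a] ∧ t₁.Sublist v) := by
  obtain ⟨t₁, t₂, rfl, hs1, hs2⟩ := List.sublist_append_iff.1 hsub
  rcases sublist_pair hs2 with rfl|rfl|rfl
  · exact Or.inl (by simpa using hs1)
  · exact Or.inr (Or.inl ⟨t₁, rfl, hs1⟩)
  · exact Or.inr (Or.inr ⟨t₁, rfl, hs1⟩)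

lemma strip_123 (hv : ∀ x ∈ v, a < x) (h : Contains (v ++ [a,a]) [1,2,3]) :
    Contains v [1,2,3] := by
  obtain ⟨t, hsub, hoiw⟩ := h
  obtain ⟨x, y, z, rfl, h1, h2⟩ := oiw_123_dest hoiw
  rcases strip_cases hsub with h|⟨t₁,he,hs⟩|⟨t₁,he,hs⟩
  · exact ⟨_, h, hoiw⟩
  · obtain ⟨p, q, rfl⟩ : ∃ p q, t₁ = [p,q] := List.length_eq_two.1 (by
      have := congrArg List.length he; simpa using this.symm)
    simp only [List.cons_append, List.nil_append, List.cons.injEq] at he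
    obtain ⟨h3, h4, h5, -⟩ := he
    have := hv q (hs.subset (by simp))
    omega
  · obtain ⟨p, rfl⟩ : ∃ p, t₁ = [p] := List.length_eq_one_iff.1 (by
      have := congrArg List.length he; simpa using this.symm)
    simp only [List.cons_append, List.nil_append, List.cons.injEq] at he
    obtain ⟨h3, h4, h5, -⟩ := he
    omega

lemma strip_213 (hv : ∀ x ∈ v, a < x) (h : Contains (v ++ [a,a]) [2,1,3]) :
    Contains v [2,1,3] := by
  obtain ⟨t, hsub, hoiw⟩ := h
  obtain ⟨x, y, z, rfl, h1, h2⟩ := oiw_213_dest hoiw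
  rcases strip_cases hsub with h|⟨t₁,he,hs⟩|⟨t₁,he,hs⟩
  · exact ⟨_, h, hoiw⟩
  · obtain ⟨p, q, rfl⟩ : ∃ p q, t₁ = [p,q] := List.length_eq_two.1 (by
      have := congrArg List.length he; simpa using this.symm)
    simp only [List.cons_append, List.nil_append, List.cons.injEq] at he
    obtain ⟨h3, h4, h5, -⟩ := he
    have := hv p (hs.subset (by simp))
    omega
  · obtain ⟨p, rfl⟩ : ∃ p, t₁ = [p] := List.length_eq_one_iff.1 (by
      have := congrArg List.length he; simpa using this.symm)
    simp only [List.cons_append, List.nil_append, List.cons.injEq] at he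
    obtain ⟨h3, h4, h5, -⟩ := he
    have := hv p (hs.subset (by simp))
    omega

lemma strip_312 (hv : ∀ x ∈ v, a < x) (h : Contains (v ++ [a,a]) [3,1,2]) :
    Contains v [3,1,2] := by
  obtain ⟨t, hsub, hoiw⟩ := h
  obtain ⟨x, y, z, rfl, h1, h2⟩ := oiw_312_dest hoiw
  rcases strip_cases hsub with h|⟨t₁,he,hs⟩|⟨t₁,he,hs⟩
  · exact ⟨_, h, hoiw⟩
  · obtain ⟨p, q, rfl⟩ : ∃ p q, t₁ = [p,q] := List.length_eq_two.1 (by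
      have := congrArg List.length he; simpa using this.symm)
    simp only [List.cons_append, List.nil_append, List.cons.injEq] at he
    obtain ⟨h3, h4, h5, -⟩ := he
    have := hv q (hs.subset (by simp))
    omega
  · obtain ⟨p, rfl⟩ : ∃ p, t₁ = [p] := List.length_eq_one_iff.1 (by
      have := congrArg List.length he; simpa using this.symm)
    simp only [List.cons_append, List.nil_append, List.cons.injEq] at he
    obtain ⟨h3, h4, h5, -⟩ := he
    omega

lemma strip_1221 (hv : ∀ x ∈ v, a < x) (h : Contains (v ++ [a,a]) [1,2,2,1]) :
    Contains v [1,2,2,1] := by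
  obtain ⟨t, hsub, hoiw⟩ := h
  obtain ⟨x, y, rfl, h1⟩ := oiw_1221_dest hoiw
  rcases strip_cases hsub with h|⟨t₁,he,hs⟩|⟨t₁,he,hs⟩
  · exact ⟨_, h, hoiw⟩
  · obtain ⟨p, q, r, rfl⟩ : ∃ p q r, t₁ = [p,q,r] := List.length_eq_three.1 (by
      have := congrArg List.length he; simpa using this.symm)
    simp only [List.cons_append, List.nil_append, List.cons.injEq] at he
    obtain ⟨h3, h4, h5, h6, -⟩ := he
    have := hv p (hs.subset (by simp))
    omega
  · obtain ⟨p, q, rfl⟩ : ∃ p q, t₁ = [p,q] := List.length_eq_two.1 (by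
      have := congrArg List.length he; simpa using this.symm)
    simp only [List.cons_append, List.nil_append, List.cons.injEq] at he
    obtain ⟨h3, h4, h5, h6, -⟩ := he
    omega

lemma strip_2112 (hv : ∀ x ∈ v, a < x) (h : Contains (v ++ [a,a]) [2,1,1,2]) :
    Contains v [2,1,1,2] := by
  obtain ⟨t, hsub, hoiw⟩ := h
  obtain ⟨x, y, rfl, h1⟩ := oiw_2112_dest hoiw
  rcases strip_cases hsub with h|⟨t₁,he,hs⟩|⟨t₁,he,hs⟩
  · exact ⟨_, h, hoiw⟩
  · obtain ⟨p, q, r, rfl⟩ : ∃ p q r, t₁ = [p,q,r] := List.length_eq_three.1 (by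
      have := congrArg List.length he; simpa using this.symm)
    simp only [List.cons_append, List.nil_append, List.cons.injEq] at he
    obtain ⟨h3, h4, h5, h6, -⟩ := he
    have := hv q (hs.subset (by simp))
    omega
  · obtain ⟨p, q, rfl⟩ : ∃ p q, t₁ = [p,q] := List.length_eq_two.1 (by
      have := congrArg List.length he; simpa using this.symm)
    simp only [List.cons_append, List.nil_append, List.cons.injEq] at he
    obtain ⟨h3, h4, h5, h6, -⟩ := he
    omega

end strip

/-! ### front lemmas : [a,a] ++ weakly decreasing avoids everything -/

section front
variable {d : List ℕ} {a : ℕ}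

lemma front_cases {t : List ℕ} (hsub : t.Sublist ([a,a] ++ d)) :
    t.Sublist d ∨ (∃ t₂, t = a :: t₂ ∧ t₂.Sublist d) ∨
      (∃ t₂, t = a :: a :: t₂ ∧ t₂.Sublist d) := by
  obtain ⟨t₁, t₂, rfl, hs1, hs2⟩ := List.sublist_append_iff.1 hsub
  rcases sublist_pair hs1 with rfl|rfl|rfl
  · exact Or.inl (by simpa using hs2)
  · exact Or.inr (Or.inl ⟨t₂, rfl, hs2⟩)
  · exact Or.inr (Or.inr ⟨t₂, rfl, hs2⟩)

lemma front_123 (hd : ∀ x ∈ d, a < x) (hp : d.Pairwise (fun x y => y ≤ x)) :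
    Avoids ([a,a] ++ d) [1,2,3] := by
  rintro ⟨t, hsub, hoiw⟩
  obtain ⟨x, y, z, rfl, h1, h2⟩ := oiw_123_dest hoiw
  rcases front_cases hsub with h|⟨t₂,he,hs⟩|⟨t₂,he,hs⟩
  · have := hp.sublist h
    simp at this
    omega
  · simp only [List.cons.injEq] at he
    obtain ⟨h3, h4⟩ := he
    have := (hp.sublist (h4 ▸ hs))
    simp at this
    omega
  · simp only [List.cons.injEq] at he
    obtain ⟨h3, h4, -⟩ := he
    omega

lemma front_213 (hd : ∀ x ∈ d, a < x) (hp : d.Pairwise (fun x y => y ≤ x)) :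
    Avoids ([a,a] ++ d) [2,1,3] := by
  rintro ⟨t, hsub, hoiw⟩
  obtain ⟨x, y, z, rfl, h1, h2⟩ := oiw_213_dest hoiw
  rcases front_cases hsub with h|⟨t₂,he,hs⟩|⟨t₂,he,hs⟩
  · have := hp.sublist h
    simp at this
    omega
  · simp only [List.cons.injEq] at he
    obtain ⟨h3, h4⟩ := he
    have : a < y := hd y (hs.subset (by simp [← h4]))
    omega
  · simp only [List.cons.injEq] at he
    obtain ⟨h3, h4, -⟩ := he
    omega

lemma front_312 (hd : ∀ x ∈ d, a < x) (hp : d.Pairwise (fun x y => y ≤ x)) :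
    Avoids ([a,a] ++ d) [3,1,2] := by
  rintro ⟨t, hsub, hoiw⟩
  obtain ⟨x, y, z, rfl, h1, h2⟩ := oiw_312_dest hoiw
  rcases front_cases hsub with h|⟨t₂,he,hs⟩|⟨t₂,he,hs⟩
  · have := hp.sublist h
    simp at this
    omega
  · simp only [List.cons.injEq] at he
    obtain ⟨h3, h4⟩ := he
    have : a < z := hd z (hs.subset (by simp [← h4]))
    omega
  · simp only [List.cons.injEq] at he
    obtain ⟨h3, h4, h5⟩ := he
    have : a < z := hd z (hs.subset (by simp [← h5]))
    omega

lemma front_1221 (hd : ∀ x ∈ d, a < x) (hp : d.Pairwise (fun x y => y ≤ x)) :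
    Avoids ([a,a] ++ d) [1,2,2,1] := by
  rintro ⟨t, hsub, hoiw⟩
  obtain ⟨x, y, rfl, h1⟩ := oiw_1221_dest hoiw
  rcases front_cases hsub with h|⟨t₂,he,hs⟩|⟨t₂,he,hs⟩
  · have := hp.sublist h
    simp at this
    omega
  · simp only [List.cons.injEq] at he
    obtain ⟨h3, h4⟩ := he
    have : a < x := hd x (hs.subset (by simp [← h4]))
    omega
  · simp only [List.cons.injEq] at he
    obtain ⟨h3, h4, -⟩ := he
    omega

lemma front_2112 (hd : ∀ x ∈ d, a < x) (hp : d.Pairwise (fun x y => y ≤ x)) :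
    Avoids ([a,a] ++ d) [2,1,1,2] := by
  rintro ⟨t, hsub, hoiw⟩
  obtain ⟨x, y, rfl, h1⟩ := oiw_2112_dest hoiw
  rcases front_cases hsub with h|⟨t₂,he,hs⟩|⟨t₂,he,hs⟩
  · have := hp.sublist h
    simp at this
    omega
  · simp only [List.cons.injEq] at he
    obtain ⟨h3, h4⟩ := he
    have : a < x := hd x (hs.subset (by simp [← h4]))
    omega
  · simp only [List.cons.injEq] at he
    obtain ⟨h3, h4, -⟩ := he
    omega

end front

/-! ### misc helpers -/

lemma avoids_short {w σ : List ℕ} (h : w.length < σ.length) : Avoids w σ := by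
  rintro ⟨t, hs, hoiw⟩
  have h1 := hs.length_le
  have h2 := hoiw.1
  omega

lemma pair_get_sublist (l : List ℕ) (i j : Fin l.length) (h : i < j) :
    [l.get i, l.get j].Sublist l := by
  have := List.map_getElem_sublist (l := l) (is := [i,j]) (by simp [h])
  simpa using this

/-! ### the decreasing doubled word -/

def Dk (b : ℕ) : ℕ → List ℕ
  | 0 => []
  | k+1 => (b+k) :: (b+k) :: Dk b k

lemma mem_Dk {b k x : ℕ} : x ∈ Dk b k ↔ b ≤ x ∧ x < b + k := by
  induction k with
  | zero => simp [Dk]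
  | succ k ih => simp only [Dk, List.mem_cons, ih]; omega

lemma count_Dk {b k i : ℕ} : (Dk b k).count i = if b ≤ i ∧ i < b + k then 2 else 0 := by
  induction k with
  | zero =>
    have h : ¬(b ≤ i ∧ i < b) := by omega
    simp [Dk, h]
  | succ k ih =>
    simp only [Dk, List.count_cons, ih, beq_iff_eq]
    split_ifs <;> omega

lemma pairwise_Dk {b k : ℕ} : (Dk b k).Pairwise (fun x y => y ≤ x) := by
  induction k with
  | zero => exact List.Pairwise.nil
  | succ k ih =>
    have h : ∀ y ∈ Dk b k, y ≤ b + k := fun y hy => by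
      have := mem_Dk.1 hy; omega
    exact List.Pairwise.cons
      (fun y hy => by
        rcases List.mem_cons.1 hy with rfl|hy
        · exact le_refl _
        · exact h y hy)
      (List.Pairwise.cons h ih)

/-! ### count splitting -/

lemma count_one_split {l : List ℕ} {a : ℕ} (h : l.count a = 1) :
    ∃ l₁ l₂, l = l₁ ++ a :: l₂ ∧ a ∉ l₁ ∧ a ∉ l₂ := by
  induction l with
  | nil => simp at h
  | cons b t ih =>
    rcases eq_or_ne b a with rfl|hb
    · have ht : t.count b = 0 := by
        simp [List.count_cons] at h; omega
      exact ⟨[], t, rfl, by simp, List.count_eq_zero.1 ht⟩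
    · have ht : t.count a = 1 := by
        simpa [List.count_cons, hb] using h
      obtain ⟨l₁, l₂, rfl, h1, h2⟩ := ih ht
      exact ⟨b :: l₁, l₂, rfl, by simp [h1, Ne.symm hb], h2⟩

lemma count_two_split {l : List ℕ} {a : ℕ} (h : l.count a = 2) :
    ∃ l₁ l₂ l₃, l = l₁ ++ a :: l₂ ++ a :: l₃ ∧ a ∉ l₁ ∧ a ∉ l₂ ∧ a ∉ l₃ := by
  induction l with
  | nil => simp at h
  | cons b t ih =>
    rcases eq_or_ne b a with rfl|hb
    · have ht : t.count b = 1 := by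
        simp [List.count_cons] at h; omega
      obtain ⟨l₂, l₃, rfl, h2, h3⟩ := count_one_split ht
      exact ⟨[], l₂, l₃, rfl, by simp, h2, h3⟩
    · have ht : t.count a = 2 := by
        simpa [List.count_cons, hb] using h
      obtain ⟨l₁, l₂, l₃, rfl, h1, h2, h3⟩ := ih ht
      exact ⟨b :: l₁, l₂, l₃, rfl, by simp [h1, Ne.symm hb], h2, h3⟩

lemma length_twoval {w : List ℕ} {a b : ℕ} (hab : a ≠ b)
    (hw : ∀ x ∈ w, x = a ∨ x = b) : w.length = w.count a + w.count b := by
  induction w with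
  | nil => simp
  | cons c t ih =>
    have hc := hw c (by simp)
    have ht := ih (fun x hx => hw x (by simp [hx]))
    rcases hc with rfl|rfl <;> simp [List.count_cons, hab, Ne.symm hab] <;> omega

lemma avoids3_twoval {w : List ℕ} {a b : ℕ}
    (hw : ∀ x ∈ w, x = a ∨ x = b) :
    Avoids w [1,2,3] ∧ Avoids w [2,1,3] ∧ Avoids w [3,1,2] := by
  refine ⟨?_, ?_, ?_⟩ <;> rintro ⟨t, hsub, hoiw⟩
  · obtain ⟨x,y,z,rfl,h1,h2⟩ := oiw_123_dest hoiw
    have hx := hw x (hsub.subset (by simp))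
    have hy := hw y (hsub.subset (by simp))
    have hz := hw z (hsub.subset (by simp))
    rcases hx with h3|h3 <;> rcases hy with h4|h4 <;> rcases hz with h5|h5 <;> omega
  · obtain ⟨x,y,z,rfl,h1,h2⟩ := oiw_213_dest hoiw
    have hx := hw x (hsub.subset (by simp))
    have hy := hw y (hsub.subset (by simp))
    have hz := hw z (hsub.subset (by simp))
    rcases hx with h3|h3 <;> rcases hy with h4|h4 <;> rcases hz with h5|h5 <;> omega
  · obtain ⟨x,y,z,rfl,h1,h2⟩ := oiw_312_dest hoiw
    have hx := hw x (hsub.subset (by simp))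
    have hy := hw y (hsub.subset (by simp))
    have hz := hw z (hsub.subset (by simp))
    rcases hx with h3|h3 <;> rcases hy with h4|h4 <;> rcases hz with h5|h5 <;> omega
-- TEST SCAFFOLD: appended after main.lean content
def L : ℕ → ℕ → List (List ℕ)
  | a, 0 => []
  | a, 1 => [[a,a,a+1,a+1],[a,a+1,a,a+1],[a+1,a,a+1,a],[a+1,a+1,a,a]]
  | a, (m+2) => ([a,a] ++ Dk (a+1) (m+2)) :: (L (a+1) (m+1)).map (· ++ [a,a])
termination_by a k => k

def Valid (a m : ℕ) (w : List ℕ) : Prop :=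
  (∀ i : ℕ, w.count i = if a ≤ i ∧ i ≤ a + m then 2 else 0) ∧
  Avoids w [1,2,2,1] ∧ Avoids w [2,1,1,2] ∧
  Avoids w [1,2,3] ∧ Avoids w [2,1,3] ∧ Avoids w [3,1,2]

lemma mem_bounds_s9 {a m : ℕ} {w : List ℕ}
    (hc : ∀ i : ℕ, w.count i = if a ≤ i ∧ i ≤ a + m then 2 else 0) :
    ∀ x ∈ w, a ≤ x ∧ x ≤ a + m := by
  intro x hx
  by_contra h
  have h2 := hc x
  rw [if_neg h] at h2
  exact (List.count_eq_zero.1 h2) hx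

lemma valid_base {a : ℕ} {w : List ℕ} : Valid a 1 w ↔ w ∈ L a 1 := by
  constructor
  · rintro ⟨hc, A1221, A2112, A123, A213, A312⟩
    have hmem : ∀ x ∈ w, x = a ∨ x = a + 1 := by
      intro x hx; have := mem_bounds_s9 hc x hx; omega
    have hca : w.count a = 2 := by
      have := hc a; simp only [le_refl, true_and, if_pos] at this
      rw [this, if_pos (by omega)]
    have hcb : w.count (a+1) = 2 := by
      have := hc (a+1); rw [if_pos (by omega)] at this; exact this
    have hlen : w.length = 4 := by
      rw [length_twoval (by omega) hmem, hca, hcb]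
    obtain ⟨x1,x2,x3,x4,rfl⟩ := length_eq_four' hlen
    have h1 := hmem x1 (by simp)
    have h2 := hmem x2 (by simp)
    have h3 := hmem x3 (by simp)
    have h4 := hmem x4 (by simp)
    simp only [List.count_cons, List.count_nil, beq_iff_eq] at hca hcb
    rcases h1 with rfl|rfl <;> rcases h2 with rfl|rfl <;>
      rcases h3 with rfl|rfl <;> rcases h4 with rfl|rfl <;>
      simp_all [L] <;>
      first
        | omega
        | exact absurd ⟨_, List.Sublist.refl _, oiw_1221 (by omega)⟩ A1221
        | exact absurd ⟨_, List.Sublist.refl _, oiw_2112 (by omega)⟩ A2112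
  · intro hw
    have hab : a < a + 1 := by omega
    simp only [L, List.mem_cons, List.mem_singleton, List.not_mem_nil, or_false] at hw
    rcases hw with rfl|rfl|rfl|rfl
    · refine ⟨?_, ?_, ?_, ?_, ?_, ?_⟩
      · intro i; simp only [List.count_cons, List.count_nil, beq_iff_eq]
        split_ifs <;> omega
      · exact front_1221 (d := [a+1,a+1]) (by intro x hx; simp at hx; omega) (by simp)
      · exact front_2112 (d := [a+1,a+1]) (by intro x hx; simp at hx; omega) (by simp)
      · exact front_123 (d := [a+1,a+1]) (by intro x hx; simp at hx; omega) (by simp)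
      · exact front_213 (d := [a+1,a+1]) (by intro x hx; simp at hx; omega) (by simp)
      · exact front_312 (d := [a+1,a+1]) (by intro x hx; simp at hx; omega) (by simp)
    · have hmem : ∀ x ∈ [a,a+1,a,a+1], x = a ∨ x = a + 1 := by intro x hx; simp at hx; omega
      obtain ⟨A1, A2, A3⟩ := avoids3_twoval hmem
      refine ⟨?_, ?_, ?_, A1, A2, A3⟩
      · intro i; simp only [List.count_cons, List.count_nil, beq_iff_eq]
        split_ifs <;> omega
      · rintro ⟨t, hsub, hoiw⟩
        obtain ⟨x, y, rfl, hxy⟩ := oiw_1221_dest hoiw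
        have := hsub.eq_of_length (by simp)
        simp only [List.cons.injEq, and_true] at this
        omega
      · rintro ⟨t, hsub, hoiw⟩
        obtain ⟨x, y, rfl, hxy⟩ := oiw_2112_dest hoiw
        have := hsub.eq_of_length (by simp)
        simp only [List.cons.injEq, and_true] at this
        omega
    · have hmem : ∀ x ∈ [a+1,a,a+1,a], x = a ∨ x = a + 1 := by intro x hx; simp at hx; omega
      obtain ⟨A1, A2, A3⟩ := avoids3_twoval hmem
      refine ⟨?_, ?_, ?_, A1, A2, A3⟩
      · intro i; simp only [List.count_cons, List.count_nil, beq_iff_eq]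
        split_ifs <;> omega
      · rintro ⟨t, hsub, hoiw⟩
        obtain ⟨x, y, rfl, hxy⟩ := oiw_1221_dest hoiw
        have := hsub.eq_of_length (by simp)
        simp only [List.cons.injEq, and_true] at this
        omega
      · rintro ⟨t, hsub, hoiw⟩
        obtain ⟨x, y, rfl, hxy⟩ := oiw_2112_dest hoiw
        have := hsub.eq_of_length (by simp)
        simp only [List.cons.injEq, and_true] at this
        omega
    · have hv : ∀ x ∈ [a+1,a+1], a < x := by intro x hx; simp at hx; omega
      have hshort : ∀ σ : List ℕ, 2 < σ.length → Avoids ([a+1,a+1] : List ℕ) σ :=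
        fun σ h => avoids_short (by simpa using h)
      refine ⟨?_, ?_, ?_, ?_, ?_, ?_⟩
      · intro i; simp only [List.count_cons, List.count_nil, beq_iff_eq]
        split_ifs <;> omega
      · exact fun hcon => hshort [1,2,2,1] (by simp) (strip_1221 hv hcon)
      · exact fun hcon => hshort [2,1,1,2] (by simp) (strip_2112 hv hcon)
      · exact fun hcon => hshort [1,2,3] (by simp) (strip_123 hv hcon)
      · exact fun hcon => hshort [2,1,3] (by simp) (strip_213 hv hcon)
      · exact fun hcon => hshort [3,1,2] (by simp) (strip_312 hv hcon)

lemma valid_step {m : ℕ}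
    (ih : ∀ a w, Valid (a+1) (m+1) w ↔ w ∈ L (a+1) (m+1))
    {a : ℕ} {w : List ℕ} : Valid a (m+2) w ↔ w ∈ L a (m+2) := by
  constructor
  · rintro ⟨hc, A1221, A2112, A123, A213, A312⟩
    have hbd := mem_bounds_s9 hc
    have hca : w.count a = 2 := by rw [hc a, if_pos (by omega)]
    obtain ⟨w₁, w₂, w₃, rfl, h1, h2, h3⟩ := count_two_split hca
    have hgt1 : ∀ x ∈ w₁, a < x := by
      intro x hx
      have hb := hbd x (by simp [hx])
      have : x ≠ a := fun he => h1 (he ▸ hx)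
      omega
    have hgt2 : ∀ x ∈ w₂, a < x := by
      intro x hx
      have hb := hbd x (by simp [hx])
      have : x ≠ a := fun he => h2 (he ▸ hx)
      omega
    have hgt3 : ∀ x ∈ w₃, a < x := by
      intro x hx
      have hb := hbd x (by simp [hx])
      have : x ≠ a := fun he => h3 (he ▸ hx)
      omega
    have G1 : ∀ x ∈ w₁, ∀ y, (y ∈ w₂ ∨ y ∈ w₃) → x = y := by
      intro x hx y hy
      by_contra hne
      have hay : a < y := by rcases hy with hy|hy; exact hgt2 y hy; exact hgt3 y hy
      have hsy : [y].Sublist (w₂ ++ a :: w₃) := List.singleton_sublist.2 (by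
        rcases hy with hy|hy
        · exact List.mem_append.2 (Or.inl hy)
        · exact List.mem_append.2 (Or.inr (by simp [hy])))
      have hsub : [x,a,y].Sublist (w₁ ++ a :: w₂ ++ a :: w₃) := by
        have h0 : ([x] ++ (a :: [y])).Sublist (w₁ ++ (a :: (w₂ ++ a :: w₃))) :=
          (List.singleton_sublist.2 hx).append (hsy.cons₂ a)
        simpa using h0
      rcases Nat.lt_or_ge x y with hlt|hge
      · exact A213 ⟨_, hsub, oiw_213 (hgt1 x hx) hlt⟩
      · exact A312 ⟨_, hsub, oiw_312 hay (by omega)⟩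
    have G2 : ∀ x ∈ w₂, ∀ y ∈ w₃, x = y := by
      intro x hx y hy
      by_contra hne
      have hay : a < y := hgt3 y hy
      have hsub : [x,a,y].Sublist (w₁ ++ a :: w₂ ++ a :: w₃) := by
        have h0 : ([x] ++ (a :: [y])).Sublist (w₂ ++ (a :: w₃)) :=
          (List.singleton_sublist.2 hx).append ((List.singleton_sublist.2 hy).cons₂ a)
        have h0' : [x,a,y].Sublist (w₂ ++ (a :: w₃)) := by simpa using h0
        have hh1 : ([x,a,y]).Sublist (a :: (w₂ ++ a :: w₃)) := h0'.cons a
        have hh2 : (a :: (w₂ ++ a :: w₃)).Sublist (w₁ ++ (a :: (w₂ ++ a :: w₃))) :=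
          List.sublist_append_right _ _
        simpa using hh1.trans hh2
      rcases Nat.lt_or_ge x y with hlt|hge
      · exact A213 ⟨_, hsub, oiw_213 (hgt2 x hx) hlt⟩
      · exact A312 ⟨_, hsub, oiw_312 hay (by omega)⟩
    have hm1 : a+1 ∈ w₁ ∨ a+1 ∈ w₂ ∨ a+1 ∈ w₃ := by
      have hcnt : (w₁ ++ a :: w₂ ++ a :: w₃).count (a+1) = 2 := by
        rw [hc (a+1), if_pos (by omega)]
      have hmem : a+1 ∈ w₁ ++ a :: w₂ ++ a :: w₃ := by
        rw [← List.count_pos_iff]; omega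
      simp only [List.mem_append, List.mem_cons] at hmem
      have hne : ¬ (a + 1 = a) := by omega
      tauto
    have hm2 : a+2 ∈ w₁ ∨ a+2 ∈ w₂ ∨ a+2 ∈ w₃ := by
      have hcnt : (w₁ ++ a :: w₂ ++ a :: w₃).count (a+2) = 2 := by
        rw [hc (a+2), if_pos (by omega)]
      have hmem : a+2 ∈ w₁ ++ a :: w₂ ++ a :: w₃ := by
        rw [← List.count_pos_iff]; omega
      simp only [List.mem_append, List.mem_cons] at hmem
      have hne : ¬ (a + 2 = a) := by omega
      tauto
    have key : (w₁ = [] ∧ w₂ = []) ∨ (w₂ = [] ∧ w₃ = []) := by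
      by_cases hw2 : w₂ = []
      · by_cases hw1 : w₁ = []
        · exact Or.inl ⟨hw1, hw2⟩
        · refine Or.inr ⟨hw2, ?_⟩
          by_contra hw3
          obtain ⟨x₀, hx₀⟩ := List.exists_mem_of_ne_nil w₁ hw1
          obtain ⟨y₀, hy₀⟩ := List.exists_mem_of_ne_nil w₃ hw3
          have hall : ∀ z, (z ∈ w₁ ∨ z ∈ w₂ ∨ z ∈ w₃) → z = y₀ := by
            intro z hz
            rcases hz with hz|hz|hz
            · exact G1 z hz y₀ (Or.inr hy₀)
            · exact absurd hz (by simp [hw2])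
            · have e1 := G1 x₀ hx₀ z (Or.inr hz)
              have e2 := G1 x₀ hx₀ y₀ (Or.inr hy₀)
              omega
          have e1 := hall (a+1) hm1
          have e2 := hall (a+2) hm2
          omega
      · exfalso
        obtain ⟨x₀, hx₀⟩ := List.exists_mem_of_ne_nil w₂ hw2
        by_cases hw1 : w₁ = []
        · by_cases hw3 : w₃ = []
          · subst hw1 hw3
            have hcv : w₂.count (a+1) = 2 := by
              have hcnt := hc (a+1)
              rw [if_pos (by omega)] at hcnt
              simp only [List.count_append, List.count_cons, List.count_nil, beq_iff_eq,
                List.nil_append] at hcnt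
              split_ifs at hcnt <;> omega
            have hrep : [a+1, a+1].Sublist w₂ := by
              have h5 := List.replicate_sublist_iff.2 (le_of_eq hcv.symm)
              simpa using h5
            have hsub : [a, a+1, a+1, a].Sublist ([] ++ a :: w₂ ++ a :: []) := by
              have h6 : ((a+1) :: (a+1) :: [a]).Sublist (w₂ ++ a :: []) := by
                have := hrep.append (List.Sublist.refl [a])
                simpa using this
              simpa using h6.cons₂ a
            exact A1221 ⟨_, hsub, oiw_1221 (by omega)⟩
          · obtain ⟨y₀, hy₀⟩ := List.exists_mem_of_ne_nil w₃ hw3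
            have hall : ∀ z, (z ∈ w₁ ∨ z ∈ w₂ ∨ z ∈ w₃) → z = y₀ := by
              intro z hz
              rcases hz with hz|hz|hz
              · exact absurd hz (by simp [hw1])
              · exact G2 z hz y₀ hy₀
              · have e1 := G2 x₀ hx₀ z hz
                have e2 := G2 x₀ hx₀ y₀ hy₀
                omega
            have e1 := hall (a+1) hm1
            have e2 := hall (a+2) hm2
            omega
        · obtain ⟨z₀, hz₀⟩ := List.exists_mem_of_ne_nil w₁ hw1
          have hall : ∀ z, (z ∈ w₁ ∨ z ∈ w₂ ∨ z ∈ w₃) → z = x₀ := by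
            intro z hz
            rcases hz with hz|hz|hz
            · exact G1 z hz x₀ (Or.inl hx₀)
            · have e1 := G1 z₀ hz₀ z (Or.inl hz)
              have e2 := G1 z₀ hz₀ x₀ (Or.inl hx₀)
              omega
            · have e1 := G1 z₀ hz₀ z (Or.inr hz)
              have e2 := G1 z₀ hz₀ x₀ (Or.inl hx₀)
              omega
          have e1 := hall (a+1) hm1
          have e2 := hall (a+2) hm2
          omega
    rcases key with ⟨e1, e2⟩|⟨e1, e2⟩
    · -- front case : w = a :: a :: w₃
      subst e1 e2
      simp only [List.nil_append] at hc A123 hbd ⊢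
      -- now the word is a :: a :: w₃  (really [] ++ a :: [] ++ a :: w₃)
      have hpw : w₃.Pairwise (fun x y => y ≤ x) := by
        by_contra hnp
        rw [List.pairwise_iff_get] at hnp
        push_neg at hnp
        obtain ⟨i, j, hij, hlt⟩ := hnp
        have hsubp := pair_get_sublist w₃ i j hij
        have hsub : [a, w₃.get i, w₃.get j].Sublist (a :: ([] ++ a :: w₃)) := by
          have h5 : [w₃.get i, w₃.get j].Sublist (a :: w₃) := hsubp.cons _
          have h6 := h5.cons₂ a
          simpa using h6
        have hga : a < w₃.get i := hgt3 _ (by exact List.get_mem w₃ i)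
        exact A123 ⟨_, hsub, oiw_123 hga (by omega)⟩
      have hc3 : ∀ i, w₃.count i = (Dk (a+1) (m+2)).count i := by
        intro i
        have hcnt := hc i
        rw [count_Dk]
        rcases eq_or_ne i a with rfl|hia
        · rw [List.count_eq_zero.2 h3, if_neg (by omega)]
        · simp only [List.count_cons, List.count_nil, beq_iff_eq, List.count_append] at hcnt
          split_ifs at hcnt ⊢ <;> omega
      haveI : IsAntisymm ℕ (fun x y : ℕ => y ≤ x) := ⟨fun _ _ h h' => le_antisymm h' h⟩
      have heq : w₃ = Dk (a+1) (m+2) :=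
        List.Perm.eq_of_pairwise (fun _ _ _ _ h h' => le_antisymm h' h) hpw pairwise_Dk (List.perm_iff_count.2 hc3)
      subst heq
      simp [L]
    · -- end case : w = w₁ ++ [a,a]
      subst e1 e2
      have hw₁ : Valid (a+1) (m+1) w₁ := by
        have hsubw : w₁.Sublist (w₁ ++ a :: [] ++ a :: []) := by
          simpa using List.sublist_append_left w₁ [a,a]
        refine ⟨?_, avoids_mono hsubw A1221, avoids_mono hsubw A2112,
          avoids_mono hsubw A123, avoids_mono hsubw A213, avoids_mono hsubw A312⟩
        intro i
        have hcnt := hc i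
        rcases eq_or_ne i a with rfl|hia
        · rw [List.count_eq_zero.2 h1, if_neg (by omega)]
        · simp only [List.count_append, List.count_cons, List.count_nil, beq_iff_eq] at hcnt
          split_ifs at hcnt ⊢ <;> omega
      have hmem := (ih a w₁).1 hw₁
      simp only [L, List.mem_cons]
      refine Or.inr (List.mem_map.2 ⟨w₁, hmem, ?_⟩)
      simp
  · intro hw
    simp only [L, List.mem_cons] at hw
    rcases hw with rfl | hw
    · have hd : ∀ x ∈ Dk (a+1) (m+2), a < x := fun x hx => by
        have := mem_Dk.1 hx; omega
      refine ⟨?_, front_1221 hd pairwise_Dk, front_2112 hd pairwise_Dk,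
        front_123 hd pairwise_Dk, front_213 hd pairwise_Dk, front_312 hd pairwise_Dk⟩
      intro i
      simp only [List.cons_append, List.nil_append, List.count_cons, count_Dk, beq_iff_eq]
      split_ifs <;> omega
    · obtain ⟨v, hv, rfl⟩ := List.mem_map.1 hw
      obtain ⟨hcv, B1221, B2112, B123, B213, B312⟩ := (ih a v).2 hv
      have hgt : ∀ x ∈ v, a < x := fun x hx => by
        have := mem_bounds_s9 hcv x hx; omega
      refine ⟨?_, fun h => B1221 (strip_1221 hgt h), fun h => B2112 (strip_2112 hgt h),
        fun h => B123 (strip_123 hgt h), fun h => B213 (strip_213 hgt h),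
        fun h => B312 (strip_312 hgt h)⟩
      intro i
      rw [List.count_append, hcv i]
      simp only [List.count_cons, List.count_nil, beq_iff_eq]
      split_ifs <;> omega

lemma valid_iff (m : ℕ) : ∀ (a : ℕ) (w : List ℕ), Valid a (m+1) w ↔ w ∈ L a (m+1) := by
  induction m with
  | zero => intro a w; exact valid_base
  | succ m ihm => intro a w; exact valid_step (fun a w => ihm (a+1) w)

lemma length_L (m : ℕ) : ∀ a, (L a (m+1)).length = m + 4 := by
  induction m with
  | zero => intro a; simp [L]
  | succ m ihm => intro a; simp [L, ihm (a+1)]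

lemma nodup_L (m : ℕ) : ∀ a, (L a (m+1)).Nodup := by
  induction m with
  | zero =>
    intro a
    simp [L, List.nodup_cons]
    all_goals omega
  | succ m ihm =>
    intro a
    have hL : L a (m+1+1) = ([a,a] ++ Dk (a+1) (m+2)) :: (L (a+1) (m+1)).map (· ++ [a,a]) := by simp [L]
    rw [hL, List.nodup_cons]
    constructor
    · intro hmem
      obtain ⟨v, hv, he⟩ := List.mem_map.1 hmem
      have hval := (valid_iff m (a+1) v).2 hv
      have hvne : v ≠ [] := by
        intro h
        subst h
        have h0 := hval.1 (a+1)
        rw [if_pos (by omega)] at h0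
        simp at h0
      obtain ⟨y, l, rfl⟩ := List.exists_cons_of_ne_nil hvne
      have hya : y = a := by
        have := congrArg List.head? he
        simpa using this
      have := mem_bounds_s9 hval.1 y (by simp)
      omega
    · exact (ihm (a+1)).map (fun l1 l2 h => by simpa using List.append_inj_left' h rfl)

theorem nonnesting_avoid_123_213_312' (n : ℕ) (hn : 2 ≤ n) :
    {w : List ℕ | IsNonnesting n w ∧
      Avoids w [1,2,3] ∧ Avoids w [2,1,3] ∧ Avoids w [3,1,2]}.ncard = n + 2 := by
  obtain ⟨m, rfl⟩ : ∃ m, n = m + 2 := ⟨n - 2, by omega⟩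
  have hset : {w : List ℕ | IsNonnesting (m+2) w ∧
      Avoids w [1,2,3] ∧ Avoids w [2,1,3] ∧ Avoids w [3,1,2]}
      = {w : List ℕ | w ∈ L 1 (m+1)} := by
    ext w
    simp only [Set.mem_setOf_eq, IsNonnesting, IsMultisetPerm, ← valid_iff m 1 w, Valid,
      show 1 + (m+1) = m+2 from by omega]
    tauto
  rw [hset]
  have h2 : {w : List ℕ | w ∈ L 1 (m+1)} = ↑(L 1 (m+1)).toFinset := by
    ext w; simp
  rw [h2, Set.ncard_coe_finset, List.toFinset_card_of_nodup (nodup_L m 1), length_L m 1]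

theorem nonnesting_avoid_123_213_312 (n : ℕ) (hn : 2 ≤ n) :
    {w : List ℕ | IsNonnesting n w ∧
      Avoids w [1,2,3] ∧ Avoids w [2,1,3] ∧ Avoids w [3,1,2]}.ncard = n + 2 :=
  nonnesting_avoid_123_213_312' n hn
end

section
/- For all n ≥ 3, the number of nonnesting permutations of the multiset {1,1,2,2,…,n,n} that avoid all three patterns 123, 231, and 312 equals n. -/
lemma getD_eq_get (w : List ℕ) (i : ℕ) (h : i < w.length) :
    w.getD i 0 = w[i] := by
  simp [List.getD_eq_getElem?_getD, List.getElem?_eq_getElem h]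

lemma get?_out (w : List ℕ) (i : ℕ) (h : w.length ≤ i) : w[i]? = none := by
  simp [List.getElem?_eq_none h]

lemma get?_in (w : List ℕ) (i : ℕ) (h : i < w.length) :
    w[i]? = some (w.getD i 0) := by
  simp [List.getElem?_eq_getElem h, getD_eq_get w i h]

lemma sub_of_indices3 (w : List ℕ) (i j l : ℕ) (hij : i < j) (hjl : j < l)
    (hl : l < w.length) :
    [w.getD i 0, w.getD j 0, w.getD l 0].Sublist w := by
  rw [List.sublist_iff_exists_orderEmbedding_getElem?_eq]
  have hmono : StrictMono (fun r => if r = 0 then i else if r = 1 then j else if r = 2 then l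
      else w.length + r - 3) := by
    intro a b hab
    rcases a with _|_|_|a <;> rcases b with _|_|_|b <;> simp <;> omega
  refine ⟨OrderEmbedding.ofStrictMono _ hmono, ?_⟩
  intro ix
  simp only [OrderEmbedding.coe_ofStrictMono]
  rcases ix with _|_|_|ix
  · simpa using (get?_in w i (by omega)).symm
  · simpa using (get?_in w j (by omega)).symm
  · simpa using (get?_in w l (by omega)).symm
  · beta_reduce
    rw [get?_out _ _ (by simp)]
    symm
    apply get?_out
    split_ifs <;> first | contradiction | omega

lemma sub_of_indices4 (w : List ℕ) (i j l m : ℕ) (hij : i < j) (hjl : j < l)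
    (hlm : l < m) (hm : m < w.length) :
    [w.getD i 0, w.getD j 0, w.getD l 0, w.getD m 0].Sublist w := by
  rw [List.sublist_iff_exists_orderEmbedding_getElem?_eq]
  have hmono : StrictMono (fun r => if r = 0 then i else if r = 1 then j else if r = 2 then l
      else if r = 3 then m else w.length + r - 4) := by
    intro a b hab
    rcases a with _|_|_|_|a <;> rcases b with _|_|_|_|b <;> simp <;> omega
  refine ⟨OrderEmbedding.ofStrictMono _ hmono, ?_⟩
  intro ix
  simp only [OrderEmbedding.coe_ofStrictMono]
  rcases ix with _|_|_|_|ix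
  · simpa using (get?_in w i (by omega)).symm
  · simpa using (get?_in w j (by omega)).symm
  · simpa using (get?_in w l (by omega)).symm
  · simpa using (get?_in w m (by omega)).symm
  · beta_reduce
    rw [get?_out _ _ (by simp)]
    symm
    apply get?_out
    split_ifs <;> first | contradiction | omega


lemma contains3_elim (w σ : List ℕ) (hσ : σ.length = 3) (h : Contains w σ) :
    ∃ i j l, i < j ∧ j < l ∧ l < w.length ∧
      ((w.getD i 0 < w.getD j 0 ↔ σ.getD 0 0 < σ.getD 1 0) ∧
       (w.getD i 0 = w.getD j 0 ↔ σ.getD 0 0 = σ.getD 1 0)) ∧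
      ((w.getD j 0 < w.getD l 0 ↔ σ.getD 1 0 < σ.getD 2 0) ∧
       (w.getD j 0 = w.getD l 0 ↔ σ.getD 1 0 = σ.getD 2 0)) ∧
      ((w.getD i 0 < w.getD l 0 ↔ σ.getD 0 0 < σ.getD 2 0) ∧
       (w.getD i 0 = w.getD l 0 ↔ σ.getD 0 0 = σ.getD 2 0)) := by
  obtain ⟨t, hsub, hlen, hiso⟩ := h
  rw [hσ] at hlen hiso
  rw [List.sublist_iff_exists_fin_orderEmbedding_get_eq] at hsub
  obtain ⟨f, hf⟩ := hsub
  have hw : ∀ r : Fin t.length, w.getD (f r) 0 = t.getD r 0 := by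
    intro r
    rw [List.getD_eq_getElem _ _ (f r).isLt, List.getD_eq_getElem _ _ r.isLt]
    exact (hf r).symm
  have h0 : (0:ℕ) < t.length := by omega
  have h1 : (1:ℕ) < t.length := by omega
  have h2 : (2:ℕ) < t.length := by omega
  have h01 : (⟨0, h0⟩ : Fin t.length) < ⟨1, h1⟩ := by simp [Fin.lt_def]
  have h12 : (⟨1, h1⟩ : Fin t.length) < ⟨2, h2⟩ := by simp [Fin.lt_def]
  refine ⟨f ⟨0, h0⟩, f ⟨1, h1⟩, f ⟨2, h2⟩,
    f.strictMono h01, f.strictMono h12, (f ⟨2, h2⟩).isLt,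
    ?_, ?_, ?_⟩
  · rw [hw ⟨0, h0⟩, hw ⟨1, h1⟩]
    exact hiso 0 1 (by omega) (by omega)
  · rw [hw ⟨1, h1⟩, hw ⟨2, h2⟩]
    exact hiso 1 2 (by omega) (by omega)
  · rw [hw ⟨0, h0⟩, hw ⟨2, h2⟩]
    exact hiso 0 2 (by omega) (by omega)

lemma contains4_elim (w σ : List ℕ) (hσ : σ.length = 4) (h : Contains w σ) :
    ∃ i j l m, i < j ∧ j < l ∧ l < m ∧ m < w.length ∧
      (∀ r s : ℕ, r < 4 → s < 4 →
        (([i,j,l,m].getD r 0 < [i,j,l,m].getD s 0 → True) ∧ True)) ∧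
      ((w.getD i 0 < w.getD j 0 ↔ σ.getD 0 0 < σ.getD 1 0) ∧
       (w.getD i 0 = w.getD j 0 ↔ σ.getD 0 0 = σ.getD 1 0)) ∧
      ((w.getD j 0 < w.getD l 0 ↔ σ.getD 1 0 < σ.getD 2 0) ∧
       (w.getD j 0 = w.getD l 0 ↔ σ.getD 1 0 = σ.getD 2 0)) ∧
      ((w.getD l 0 < w.getD m 0 ↔ σ.getD 2 0 < σ.getD 3 0) ∧
       (w.getD l 0 = w.getD m 0 ↔ σ.getD 2 0 = σ.getD 3 0)) ∧
      ((w.getD i 0 < w.getD m 0 ↔ σ.getD 0 0 < σ.getD 3 0) ∧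
       (w.getD i 0 = w.getD m 0 ↔ σ.getD 0 0 = σ.getD 3 0)) := by
  obtain ⟨t, hsub, hlen, hiso⟩ := h
  rw [hσ] at hlen hiso
  rw [List.sublist_iff_exists_fin_orderEmbedding_get_eq] at hsub
  obtain ⟨f, hf⟩ := hsub
  have hw : ∀ r : Fin t.length, w.getD (f r) 0 = t.getD r 0 := by
    intro r
    rw [List.getD_eq_getElem _ _ (f r).isLt, List.getD_eq_getElem _ _ r.isLt]
    exact (hf r).symm
  have h0 : (0:ℕ) < t.length := by omega
  have h1 : (1:ℕ) < t.length := by omega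
  have h2 : (2:ℕ) < t.length := by omega
  have h3 : (3:ℕ) < t.length := by omega
  have h01 : (⟨0, h0⟩ : Fin t.length) < ⟨1, h1⟩ := by simp [Fin.lt_def]
  have h12 : (⟨1, h1⟩ : Fin t.length) < ⟨2, h2⟩ := by simp [Fin.lt_def]
  have h23 : (⟨2, h2⟩ : Fin t.length) < ⟨3, h3⟩ := by simp [Fin.lt_def]
  refine ⟨f ⟨0, h0⟩, f ⟨1, h1⟩, f ⟨2, h2⟩, f ⟨3, h3⟩,
    f.strictMono h01, f.strictMono h12, f.strictMono h23, (f ⟨3, h3⟩).isLt,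
    by simp, ?_, ?_, ?_, ?_⟩
  · rw [hw ⟨0, h0⟩, hw ⟨1, h1⟩]
    exact hiso 0 1 (by omega) (by omega)
  · rw [hw ⟨1, h1⟩, hw ⟨2, h2⟩]
    exact hiso 1 2 (by omega) (by omega)
  · rw [hw ⟨2, h2⟩, hw ⟨3, h3⟩]
    exact hiso 2 3 (by omega) (by omega)
  · rw [hw ⟨0, h0⟩, hw ⟨3, h3⟩]
    exact hiso 0 3 (by omega) (by omega)


def dbl (u : List ℕ) : List ℕ := u.flatMap (fun x => [x, x])

def desc (a b : ℕ) : List ℕ := (List.range' (a+1) (b-a)).reverse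

def rotw (n k : ℕ) : List ℕ := desc 0 k ++ desc k n

def wkp (n k : ℕ) : List ℕ := dbl (rotw n k)

lemma dbl_cons (x : ℕ) (u : List ℕ) : dbl (x :: u) = x :: x :: dbl u := rfl

lemma dbl_nil : dbl [] = [] := rfl

@[simp] lemma length_dbl (u : List ℕ) : (dbl u).length = 2 * u.length := by
  induction u with
  | nil => rfl
  | cons x u ih => rw [dbl_cons]; simp [ih]; omega

@[simp] lemma count_dbl (v : ℕ) (u : List ℕ) : (dbl u).count v = 2 * u.count v := by
  induction u with
  | nil => rfl
  | cons x u ih =>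
    rw [dbl_cons]
    simp [List.count_cons, ih]
    split_ifs <;> omega

lemma getD_dbl (u : List ℕ) (i : ℕ) : (dbl u).getD i 0 = u.getD (i/2) 0 := by
  induction u generalizing i with
  | nil => rfl
  | cons x u ih =>
    rw [dbl_cons]
    rcases i with _|_|i
    · rfl
    · rfl
    · have h2 : (i + 2) / 2 = i / 2 + 1 := by omega
      simp only [List.getD_cons_succ, ih i, h2]

@[simp] lemma length_desc (a b : ℕ) : (desc a b).length = b - a := by
  simp [desc]

lemma getD_desc (a b i : ℕ) (h : i < b - a) : (desc a b).getD i 0 = b - i := by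
  rw [desc, List.getD_eq_getElem _ _ (by simpa using h)]
  rw [List.getElem_reverse]
  rw [List.getElem_range']
  simp at *
  omega

lemma count_desc (a b v : ℕ) : (desc a b).count v = if a + 1 ≤ v ∧ v ≤ b then 1 else 0 := by
  rw [desc, List.count_reverse]
  have hmem : v ∈ List.range' (a+1) (b-a) ↔ a + 1 ≤ v ∧ v < a + 1 + (b - a) := List.mem_range'_1
  split_ifs with h
  · have hn : (List.range' (a+1) (b-a)).Nodup := (by simp [List.nodup_range'] : (List.range' (a+1) (b-a)).Nodup)
    exact List.count_eq_one_of_mem hn (hmem.mpr (by omega))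
  · exact List.count_eq_zero_of_not_mem (fun hc => h (by have := hmem.mp hc; omega))

@[simp] lemma length_rotw (n k : ℕ) (hk : k ≤ n) : (rotw n k).length = n := by
  simp [rotw]; omega

lemma getD_rotw (n k i : ℕ) (hk : k ≤ n) (hi : i < n) :
    (rotw n k).getD i 0 = if i < k then k - i else n + k - i := by
  rw [rotw]
  rcases lt_or_ge i k with h | h
  · rw [List.getD_append _ _ _ _ (by simpa using h), getD_desc 0 k i (by omega), if_pos h]
  · rw [List.getD_append_right _ _ _ _ (by simpa using h)]
    simp only [length_desc, Nat.sub_zero]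
    rw [getD_desc k n (i - k) (by omega)]
    rw [if_neg (by omega)]
    omega

lemma count_rotw (n k v : ℕ) (hk : k ≤ n) :
    (rotw n k).count v = if 1 ≤ v ∧ v ≤ n then 1 else 0 := by
  rw [rotw, List.count_append, count_desc, count_desc]
  split_ifs <;> omega

lemma getD_wkp (n k i : ℕ) (hk : k ≤ n) (hi : i < 2 * n) :
    (wkp n k).getD i 0 = if i / 2 < k then k - i / 2 else n + k - i / 2 := by
  rw [wkp, getD_dbl, getD_rotw n k _ hk (by omega)]

@[simp] lemma length_wkp (n k : ℕ) (hk : k ≤ n) : (wkp n k).length = 2 * n := by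
  simp [wkp, length_rotw n k hk]
-- concrete pattern intro/elim lemmas (to be appended after prelude in full file)

lemma oiw3 (a b c x y z : ℕ)
    (h01 : (a < b ↔ x < y) ∧ (a = b ↔ x = y))
    (h12 : (b < c ↔ y < z) ∧ (b = c ↔ y = z))
    (h02 : (a < c ↔ x < z) ∧ (a = c ↔ x = z)) :
    OrderIsoWord [a, b, c] [x, y, z] := by
  refine ⟨rfl, ?_⟩
  intro r s hr hs
  simp only [List.length_cons, List.length_nil] at hr hs
  interval_cases r <;> interval_cases s <;> simp only [List.getD_cons_zero, List.getD_cons_succ] <;> constructor <;> first | trivial | omega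

lemma oiw4 (a b c d x y z v : ℕ)
    (h01 : (a < b ↔ x < y) ∧ (a = b ↔ x = y))
    (h02 : (a < c ↔ x < z) ∧ (a = c ↔ x = z))
    (h03 : (a < d ↔ x < v) ∧ (a = d ↔ x = v))
    (h12 : (b < c ↔ y < z) ∧ (b = c ↔ y = z))
    (h13 : (b < d ↔ y < v) ∧ (b = d ↔ y = v))
    (h23 : (c < d ↔ z < v) ∧ (c = d ↔ z = v)) :
    OrderIsoWord [a, b, c, d] [x, y, z, v] := by
  refine ⟨rfl, ?_⟩
  intro r s hr hs
  simp only [List.length_cons, List.length_nil] at hr hs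
  interval_cases r <;> interval_cases s <;> simp only [List.getD_cons_zero, List.getD_cons_succ] <;> constructor <;> first | trivial | omega

section PatternLemmas
variable (w : List ℕ)

lemma na123 (h : Avoids w [1,2,3]) :
    ∀ i j l : ℕ, i < j → j < l → l < w.length →
      w.getD i 0 < w.getD j 0 → w.getD j 0 < w.getD l 0 → False := by
  intro i j l hij hjl hl h1 h2
  exact h ⟨_, sub_of_indices3 w i j l hij hjl hl,
    oiw3 _ _ _ 1 2 3 (by omega) (by omega) (by omega)⟩

lemma na231 (h : Avoids w [2,3,1]) :
    ∀ i j l : ℕ, i < j → j < l → l < w.length →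
      w.getD l 0 < w.getD i 0 → w.getD i 0 < w.getD j 0 → False := by
  intro i j l hij hjl hl h1 h2
  exact h ⟨_, sub_of_indices3 w i j l hij hjl hl,
    oiw3 _ _ _ 2 3 1 (by omega) (by omega) (by omega)⟩

lemma na312 (h : Avoids w [3,1,2]) :
    ∀ i j l : ℕ, i < j → j < l → l < w.length →
      w.getD j 0 < w.getD l 0 → w.getD l 0 < w.getD i 0 → False := by
  intro i j l hij hjl hl h1 h2
  exact h ⟨_, sub_of_indices3 w i j l hij hjl hl,
    oiw3 _ _ _ 3 1 2 (by omega) (by omega) (by omega)⟩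

/-- combined nonnesting consequence -/
lemma naNN (h1 : Avoids w [1,2,2,1]) (h2 : Avoids w [2,1,1,2]) :
    ∀ i j l m : ℕ, i < j → j < l → l < m → m < w.length →
      w.getD j 0 = w.getD l 0 → w.getD i 0 = w.getD m 0 →
      w.getD i 0 ≠ w.getD j 0 → False := by
  intro i j l m hij hjl hlm hm e1 e2 hne
  rcases Nat.lt_or_ge (w.getD i 0) (w.getD j 0) with hlt | hge
  · exact h1 ⟨_, sub_of_indices4 w i j l m hij hjl hlm hm,
      oiw4 _ _ _ _ 1 2 2 1 (by omega) (by omega) (by omega) (by omega) (by omega) (by omega)⟩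
  · exact h2 ⟨_, sub_of_indices4 w i j l m hij hjl hlm hm,
      oiw4 _ _ _ _ 2 1 1 2 (by omega) (by omega) (by omega) (by omega) (by omega) (by omega)⟩

lemma elim123 (h : Contains w [1,2,3]) :
    ∃ i j l, i < j ∧ j < l ∧ l < w.length ∧
      w.getD i 0 < w.getD j 0 ∧ w.getD j 0 < w.getD l 0 := by
  obtain ⟨i, j, l, hij, hjl, hl, p1, p2, p3⟩ := contains3_elim w _ (by rfl) h
  exact ⟨i, j, l, hij, hjl, hl, p1.1.mpr (by simp [List.getD_cons_zero, List.getD_cons_succ]), p2.1.mpr (by simp [List.getD_cons_zero, List.getD_cons_succ])⟩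

lemma elim231 (h : Contains w [2,3,1]) :
    ∃ i j l, i < j ∧ j < l ∧ l < w.length ∧
      w.getD l 0 < w.getD i 0 ∧ w.getD i 0 < w.getD j 0 := by
  obtain ⟨i, j, l, hij, hjl, hl, p1, p2, p3⟩ := contains3_elim w _ (by rfl) h
  refine ⟨i, j, l, hij, hjl, hl, ?_, p1.1.mpr (by simp [List.getD_cons_zero, List.getD_cons_succ])⟩
  have h1 : ¬ (w.getD i 0 < w.getD l 0) := fun hc => by
    have := p3.1.mp hc; simp [List.getD_cons_zero, List.getD_cons_succ] at this
  have h2 : ¬ (w.getD i 0 = w.getD l 0) := fun hc => by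
    have := p3.2.mp hc; simp [List.getD_cons_zero, List.getD_cons_succ] at this
  omega

lemma elim312 (h : Contains w [3,1,2]) :
    ∃ i j l, i < j ∧ j < l ∧ l < w.length ∧
      w.getD j 0 < w.getD l 0 ∧ w.getD l 0 < w.getD i 0 := by
  obtain ⟨i, j, l, hij, hjl, hl, p1, p2, p3⟩ := contains3_elim w _ (by rfl) h
  refine ⟨i, j, l, hij, hjl, hl, p2.1.mpr (by simp [List.getD_cons_zero, List.getD_cons_succ]), ?_⟩
  have h1 : ¬ (w.getD i 0 < w.getD l 0) := fun hc => by
    have := p3.1.mp hc; simp [List.getD_cons_zero, List.getD_cons_succ] at this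
  have h2 : ¬ (w.getD i 0 = w.getD l 0) := fun hc => by
    have := p3.2.mp hc; simp [List.getD_cons_zero, List.getD_cons_succ] at this
  omega

lemma elim1221 (h : Contains w [1,2,2,1]) :
    ∃ i j l m, i < j ∧ j < l ∧ l < m ∧ m < w.length ∧
      w.getD i 0 < w.getD j 0 ∧ w.getD j 0 = w.getD l 0 ∧ w.getD i 0 = w.getD m 0 := by
  obtain ⟨i, j, l, m, hij, hjl, hlm, hm, _, p01, p12, p23, p03⟩ := contains4_elim w _ (by rfl) h
  exact ⟨i, j, l, m, hij, hjl, hlm, hm, p01.1.mpr (by simp [List.getD_cons_zero, List.getD_cons_succ]),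
    p12.2.mpr (by simp [List.getD_cons_zero, List.getD_cons_succ]), p03.2.mpr (by simp [List.getD_cons_zero, List.getD_cons_succ])⟩

lemma elim2112 (h : Contains w [2,1,1,2]) :
    ∃ i j l m, i < j ∧ j < l ∧ l < m ∧ m < w.length ∧
      w.getD j 0 < w.getD i 0 ∧ w.getD j 0 = w.getD l 0 ∧ w.getD i 0 = w.getD m 0 := by
  obtain ⟨i, j, l, m, hij, hjl, hlm, hm, _, p01, p12, p23, p03⟩ := contains4_elim w _ (by rfl) h
  refine ⟨i, j, l, m, hij, hjl, hlm, hm, ?_, p12.2.mpr (by simp [List.getD_cons_zero, List.getD_cons_succ]),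
    p03.2.mpr (by simp [List.getD_cons_zero, List.getD_cons_succ])⟩
  have h1 : ¬ (w.getD i 0 < w.getD j 0) := fun hc => by
    have := p01.1.mp hc; simp [List.getD_cons_zero, List.getD_cons_succ] at this
  have h2 : ¬ (w.getD i 0 = w.getD j 0) := fun hc => by
    have := p01.2.mp hc; simp [List.getD_cons_zero, List.getD_cons_succ] at this
  omega

end PatternLemmas

lemma pos_of_count (w : List ℕ) (v : ℕ) (h : 1 ≤ w.count v) :
    ∃ t, t < w.length ∧ w.getD t 0 = v := by
  have hv : v ∈ w := List.count_pos_iff.mp h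
  obtain ⟨t, ht, he⟩ := List.mem_iff_getElem.mp hv
  exact ⟨t, ht, by rw [getD_eq_get w t ht]; exact he⟩

lemma two_pos_of_count (w : List ℕ) (v : ℕ) (h : 2 ≤ w.count v) :
    ∃ p q, p < q ∧ q < w.length ∧ w.getD p 0 = v ∧ w.getD q 0 = v := by
  have hs : (List.replicate 2 v).Sublist w := List.replicate_sublist_iff.mpr h
  rw [List.sublist_iff_exists_fin_orderEmbedding_get_eq] at hs
  obtain ⟨f, hf⟩ := hs
  have hl : (List.replicate 2 v).length = 2 := by simp
  have h0 : (0:ℕ) < (List.replicate 2 v).length := by omega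
  have h1 : (1:ℕ) < (List.replicate 2 v).length := by omega
  have h01 : (⟨0, h0⟩ : Fin _) < ⟨1, h1⟩ := by simp [Fin.lt_def]
  refine ⟨f ⟨0, h0⟩, f ⟨1, h1⟩, f.strictMono h01, (f ⟨1, h1⟩).isLt, ?_, ?_⟩
  · rw [getD_eq_get _ _ (f ⟨0, h0⟩).isLt, ← List.get_eq_getElem, ← hf ⟨0, h0⟩]
    simp
  · rw [getD_eq_get _ _ (f ⟨1, h1⟩).isLt, ← List.get_eq_getElem, ← hf ⟨1, h1⟩]
    simp

lemma count_ge_three (w : List ℕ) (v p q r : ℕ) (hpq : p < q) (hqr : q < r)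
    (hr : r < w.length) (hp : w.getD p 0 = v) (hq : w.getD q 0 = v)
    (hv : w.getD r 0 = v) : 3 ≤ w.count v := by
  have hs := sub_of_indices3 w p q r hpq hqr hr
  rw [hp, hq, hv] at hs
  have := hs.count_le v
  simpa using this

lemma wkp_perm (n k : ℕ) (h1 : 1 ≤ k) (hk : k ≤ n) : IsMultisetPerm n (wkp n k) := by
  intro v
  rw [wkp, count_dbl, count_rotw n k v hk]
  split_ifs <;> omega

lemma wkp_avoids (n k : ℕ) (h1 : 1 ≤ k) (hk : k ≤ n) :
    Avoids (wkp n k) [1,2,3] ∧ Avoids (wkp n k) [2,3,1] ∧ Avoids (wkp n k) [3,1,2] ∧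
    Avoids (wkp n k) [1,2,2,1] ∧ Avoids (wkp n k) [2,1,1,2] := by
  refine ⟨?_, ?_, ?_, ?_, ?_⟩
  · intro hc
    obtain ⟨i, j, l, hij, hjl, hl, v1, v2⟩ := elim123 _ hc
    rw [length_wkp n k hk] at hl
    rw [getD_wkp n k i hk (by omega)] at v1
    rw [getD_wkp n k j hk (by omega)] at v1 v2
    rw [getD_wkp n k l hk (by omega)] at v2
    split_ifs at v1 v2 <;> omega
  · intro hc
    obtain ⟨i, j, l, hij, hjl, hl, v1, v2⟩ := elim231 _ hc
    rw [length_wkp n k hk] at hl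
    rw [getD_wkp n k l hk (by omega)] at v1
    rw [getD_wkp n k i hk (by omega)] at v1 v2
    rw [getD_wkp n k j hk (by omega)] at v2
    split_ifs at v1 v2 <;> omega
  · intro hc
    obtain ⟨i, j, l, hij, hjl, hl, v1, v2⟩ := elim312 _ hc
    rw [length_wkp n k hk] at hl
    rw [getD_wkp n k j hk (by omega)] at v1
    rw [getD_wkp n k l hk (by omega)] at v1 v2
    rw [getD_wkp n k i hk (by omega)] at v2
    split_ifs at v1 v2 <;> omega
  · intro hc
    obtain ⟨i, j, l, m, hij, hjl, hlm, hm, v1, e1, e2⟩ := elim1221 _ hc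
    rw [length_wkp n k hk] at hm
    rw [getD_wkp n k i hk (by omega)] at v1 e2
    rw [getD_wkp n k j hk (by omega)] at v1 e1
    rw [getD_wkp n k l hk (by omega)] at e1
    rw [getD_wkp n k m hk (by omega)] at e2
    split_ifs at v1 e1 e2 <;> omega
  · intro hc
    obtain ⟨i, j, l, m, hij, hjl, hlm, hm, v1, e1, e2⟩ := elim2112 _ hc
    rw [length_wkp n k hk] at hm
    rw [getD_wkp n k i hk (by omega)] at v1 e2
    rw [getD_wkp n k j hk (by omega)] at v1 e1
    rw [getD_wkp n k l hk (by omega)] at e1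
    rw [getD_wkp n k m hk (by omega)] at e2
    split_ifs at v1 e1 e2 <;> omega

lemma wkp_first (n k : ℕ) (h1 : 1 ≤ k) (hk : k ≤ n) : (wkp n k).getD 0 0 = k := by
  rw [getD_wkp n k 0 hk (by omega)]
  simp only [Nat.zero_div, Nat.sub_zero]
  rw [if_pos (show (0:ℕ) < k by omega)]

lemma adjacency (n : ℕ) (hn : 3 ≤ n) (w : List ℕ) (hMS : IsMultisetPerm n w)
    (a1221 : Avoids w [1,2,2,1]) (a2112 : Avoids w [2,1,1,2])
    (a123 : Avoids w [1,2,3]) (a231 : Avoids w [2,3,1]) (a312 : Avoids w [3,1,2]) :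
    ∀ p q, p < q → q < w.length → w.getD p 0 = w.getD q 0 → q = p + 1 := by
  have hforb : ∀ i j l : ℕ, i < j → j < l → l < w.length →
      ((w.getD i 0 < w.getD j 0 ∧ w.getD j 0 < w.getD l 0) ∨
       (w.getD l 0 < w.getD i 0 ∧ w.getD i 0 < w.getD j 0) ∨
       (w.getD j 0 < w.getD l 0 ∧ w.getD l 0 < w.getD i 0)) → False := by
    intro i j l h1 h2 h3 hd
    rcases hd with ⟨u1, u2⟩ | ⟨u1, u2⟩ | ⟨u1, u2⟩
    · exact na123 w a123 i j l h1 h2 h3 u1 u2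
    · exact na231 w a231 i j l h1 h2 h3 u1 u2
    · exact na312 w a312 i j l h1 h2 h3 u1 u2
  have hNN := naNN w a1221 a2112
  have hocc : ∀ v, 1 ≤ v → v ≤ n → ∃ t, t < w.length ∧ w.getD t 0 = v := by
    intro v hv1 hv2
    apply pos_of_count
    rw [hMS v, if_pos ⟨hv1, hv2⟩]
    omega
  have hmax : ∀ t, t < w.length → w.getD t 0 ≤ n ∧ 1 ≤ w.getD t 0 := by
    intro t ht
    by_contra hc
    have h0 : w.count (w.getD t 0) = 0 := by
      rw [hMS]
      rw [if_neg]
      omega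
    have h1 : 0 < w.count (w.getD t 0) := by
      apply List.count_pos_iff.mpr
      rw [getD_eq_get w t ht]
      exact List.getElem_mem ht
    omega
  have htwo : ∀ p q r : ℕ, p < q → q < r → r < w.length → w.getD p 0 = w.getD q 0 →
      w.getD q 0 = w.getD r 0 → False := by
    intro p q r hpq hqr hr e1 e2
    have h3 := count_ge_three w (w.getD p 0) p q r hpq hqr hr rfl e1.symm (e1.trans e2).symm
    have := hMS (w.getD p 0)
    split_ifs at this <;> omega
  intro p q hpq hq he
  by_contra hne
  have hq2 : p + 1 < q := by omega
  have m1 := hmax p (by omega)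
  have m2 := hmax (p+1) (by omega)
  have m3 := hmax q (by omega)
  have hAB : w.getD p 0 ≠ w.getD (p+1) 0 := fun hcc =>
    htwo p (p+1) q (by omega) hq2 hq hcc (by omega)
  have hcntB : w.count (w.getD (p+1) 0) = 2 := by
    rw [hMS, if_pos ⟨m2.2, m2.1⟩]
  obtain ⟨s1, s2, h12, hs2len, hb1, hb2⟩ := two_pos_of_count w (w.getD (p+1) 0) hcntB.ge
  have hS : ∃ s, s < w.length ∧ w.getD s 0 = w.getD (p+1) 0 ∧ s ≠ p + 1 := by
    rcases eq_or_ne s1 (p+1) with h | h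
    · exact ⟨s2, hs2len, hb2, by omega⟩
    · exact ⟨s1, by omega, hb1, h⟩
  obtain ⟨s, hslen, hsB, hsne⟩ := hS
  have m4 := hmax s hslen
  have hsp : s ≠ p := by intro hcc; rw [hcc] at hsB; exact hAB hsB
  have hsq : s ≠ q := by intro hcc; rw [hcc] at hsB; exact hAB (he.trans hsB)
  have hcase : s < p ∨ (p + 1 < s ∧ s < q) ∨ q < s := by omega
  rcases hcase with hcs | ⟨hc1, hc2⟩ | hcs
  · -- CASE II : s < p < p+1 < q
    rcases Nat.lt_or_ge (w.getD p 0) (w.getD (p+1) 0) with hab | hab'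
    · -- II.a : A < B
      have hBn : w.getD (p+1) 0 = n := by
        by_contra hcB
        obtain ⟨t, ht, hvt⟩ := hocc (w.getD (p+1) 0 + 1) (by omega) (by omega)
        have hreg : t < s ∨ (s < t ∧ t < p) ∨ (p + 1 < t ∧ t < q) ∨ q < t := by
          have t1 : t ≠ p := by rintro rfl; omega
          have t2 : t ≠ p+1 := by rintro rfl; omega
          have t3 : t ≠ q := by rintro rfl; omega
          have t4 : t ≠ s := by rintro rfl; omega
          omega
        rcases hreg with h | ⟨h1, h2⟩ | ⟨h1, h2⟩ | h
        · exact hforb t p (p+1) (by omega) (by omega) (by omega) (by omega)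
        · exact hforb t p (p+1) (by omega) (by omega) (by omega) (by omega)
        · exact hforb s t q (by omega) (by omega) (by omega) (by omega)
        · exact hforb p (p+1) t (by omega) (by omega) (by omega) (by omega)
      have hA1 : w.getD p 0 = 1 := by
        by_contra hcA
        obtain ⟨t, ht, hvt⟩ := hocc (w.getD p 0 - 1) (by omega) (by omega)
        have hreg : t < s ∨ (s < t ∧ t < p) ∨ (p + 1 < t ∧ t < q) ∨ q < t := by
          have t1 : t ≠ p := by rintro rfl; omega
          have t2 : t ≠ p+1 := by rintro rfl; omega
          have t3 : t ≠ q := by rintro rfl; omega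
          have t4 : t ≠ s := by rintro rfl; omega
          omega
        rcases hreg with h | ⟨h1, h2⟩ | ⟨h1, h2⟩ | h
        · exact hforb t p (p+1) (by omega) (by omega) (by omega) (by omega)
        · exact hforb t p (p+1) (by omega) (by omega) (by omega) (by omega)
        · exact hforb s t q (by omega) (by omega) (by omega) (by omega)
        · exact hforb p (p+1) t (by omega) (by omega) (by omega) (by omega)
      obtain ⟨t, ht, hvt⟩ := hocc 2 (by omega) (by omega)
      have hreg : t < s ∨ (s < t ∧ t < p) ∨ (p + 1 < t ∧ t < q) ∨ q < t := by
        have t1 : t ≠ p := by rintro rfl; omega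
        have t2 : t ≠ p+1 := by rintro rfl; omega
        have t3 : t ≠ q := by rintro rfl; omega
        have t4 : t ≠ s := by rintro rfl; omega
        omega
      rcases hreg with h | ⟨h1, h2⟩ | ⟨h1, h2⟩ | h
      · exact hforb t s p (by omega) (by omega) (by omega) (by omega)
      · exact hforb t (p+1) q (by omega) (by omega) (by omega) (by omega)
      · exact hforb s p t (by omega) (by omega) (by omega) (by omega)
      · exact hforb s p t (by omega) (by omega) (by omega) (by omega)
    · -- II.b : B < A
      have hab : w.getD (p+1) 0 < w.getD p 0 := by omega
      have hAn : w.getD p 0 = n := by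
        by_contra hcA
        obtain ⟨t, ht, hvt⟩ := hocc (w.getD p 0 + 1) (by omega) (by omega)
        have hreg : t < s ∨ (s < t ∧ t < p) ∨ (p + 1 < t ∧ t < q) ∨ q < t := by
          have t1 : t ≠ p := by rintro rfl; omega
          have t2 : t ≠ p+1 := by rintro rfl; omega
          have t3 : t ≠ q := by rintro rfl; omega
          have t4 : t ≠ s := by rintro rfl; omega
          omega
        rcases hreg with h | ⟨h1, h2⟩ | ⟨h1, h2⟩ | h
        · exact hforb t s p (by omega) (by omega) (by omega) (by omega)
        · exact hforb t (p+1) q (by omega) (by omega) (by omega) (by omega)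
        · exact hforb s p t (by omega) (by omega) (by omega) (by omega)
        · exact hforb s p t (by omega) (by omega) (by omega) (by omega)
      have hB1 : w.getD (p+1) 0 = 1 := by
        by_contra hcB
        obtain ⟨t, ht, hvt⟩ := hocc (w.getD (p+1) 0 - 1) (by omega) (by omega)
        have hreg : t < s ∨ (s < t ∧ t < p) ∨ (p + 1 < t ∧ t < q) ∨ q < t := by
          have t1 : t ≠ p := by rintro rfl; omega
          have t2 : t ≠ p+1 := by rintro rfl; omega
          have t3 : t ≠ q := by rintro rfl; omega
          have t4 : t ≠ s := by rintro rfl; omega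
          omega
        rcases hreg with h | ⟨h1, h2⟩ | ⟨h1, h2⟩ | h
        · exact hforb t s p (by omega) (by omega) (by omega) (by omega)
        · exact hforb t (p+1) q (by omega) (by omega) (by omega) (by omega)
        · exact hforb s p t (by omega) (by omega) (by omega) (by omega)
        · exact hforb s p t (by omega) (by omega) (by omega) (by omega)
      obtain ⟨t, ht, hvt⟩ := hocc 2 (by omega) (by omega)
      have hreg : t < s ∨ (s < t ∧ t < p) ∨ (p + 1 < t ∧ t < q) ∨ q < t := by
        have t1 : t ≠ p := by rintro rfl; omega
        have t2 : t ≠ p+1 := by rintro rfl; omega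
        have t3 : t ≠ q := by rintro rfl; omega
        have t4 : t ≠ s := by rintro rfl; omega
        omega
      rcases hreg with h | ⟨h1, h2⟩ | ⟨h1, h2⟩ | h
      · exact hforb t p (p+1) (by omega) (by omega) (by omega) (by omega)
      · exact hforb t p (p+1) (by omega) (by omega) (by omega) (by omega)
      · exact hforb s t q (by omega) (by omega) (by omega) (by omega)
      · exact hforb p (p+1) t (by omega) (by omega) (by omega) (by omega)
  · -- middle case
    exact hNN p (p+1) s q (by omega) (by omega) (by omega) hq hsB.symm he hAB
  · -- CASE I : p < p+1 < q < s
    rcases Nat.lt_or_ge (w.getD p 0) (w.getD (p+1) 0) with hab | hab'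
    · -- I.a : A < B
      have hBn : w.getD (p+1) 0 = n := by
        by_contra hcB
        obtain ⟨t, ht, hvt⟩ := hocc (w.getD (p+1) 0 + 1) (by omega) (by omega)
        have hreg : t < p ∨ (p + 1 < t ∧ t < q) ∨ (q < t ∧ t < s) ∨ s < t := by
          have t1 : t ≠ p := by rintro rfl; omega
          have t2 : t ≠ p+1 := by rintro rfl; omega
          have t3 : t ≠ q := by rintro rfl; omega
          have t4 : t ≠ s := by rintro rfl; omega
          omega
        rcases hreg with h | ⟨h1, h2⟩ | ⟨h1, h2⟩ | h
        · exact hforb t p (p+1) (by omega) (by omega) (by omega) (by omega)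
        · exact hforb t q s (by omega) (by omega) (by omega) (by omega)
        · exact hforb p (p+1) t (by omega) (by omega) (by omega) (by omega)
        · exact hforb p (p+1) t (by omega) (by omega) (by omega) (by omega)
      have hA1 : w.getD p 0 = 1 := by
        by_contra hcA
        obtain ⟨t, ht, hvt⟩ := hocc (w.getD p 0 - 1) (by omega) (by omega)
        have hreg : t < p ∨ (p + 1 < t ∧ t < q) ∨ (q < t ∧ t < s) ∨ s < t := by
          have t1 : t ≠ p := by rintro rfl; omega
          have t2 : t ≠ p+1 := by rintro rfl; omega
          have t3 : t ≠ q := by rintro rfl; omega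
          have t4 : t ≠ s := by rintro rfl; omega
          omega
        rcases hreg with h | ⟨h1, h2⟩ | ⟨h1, h2⟩ | h
        · exact hforb t p (p+1) (by omega) (by omega) (by omega) (by omega)
        · exact hforb t q s (by omega) (by omega) (by omega) (by omega)
        · exact hforb p (p+1) t (by omega) (by omega) (by omega) (by omega)
        · exact hforb p (p+1) t (by omega) (by omega) (by omega) (by omega)
      obtain ⟨t, ht, hvt⟩ := hocc 2 (by omega) (by omega)
      have hreg : t < p ∨ (p + 1 < t ∧ t < q) ∨ (q < t ∧ t < s) ∨ s < t := by
        have t1 : t ≠ p := by rintro rfl; omega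
        have t2 : t ≠ p+1 := by rintro rfl; omega
        have t3 : t ≠ q := by rintro rfl; omega
        have t4 : t ≠ s := by rintro rfl; omega
        omega
      rcases hreg with h | ⟨h1, h2⟩ | ⟨h1, h2⟩ | h
      · exact hforb t (p+1) q (by omega) (by omega) (by omega) (by omega)
      · exact hforb p t s (by omega) (by omega) (by omega) (by omega)
      · exact hforb p t s (by omega) (by omega) (by omega) (by omega)
      · exact hforb (p+1) q t (by omega) (by omega) (by omega) (by omega)
    · -- I.b : B < A
      have hab : w.getD (p+1) 0 < w.getD p 0 := by omega
      have hAn : w.getD p 0 = n := by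
        by_contra hcA
        obtain ⟨t, ht, hvt⟩ := hocc (w.getD p 0 + 1) (by omega) (by omega)
        have hreg : t < p ∨ (p + 1 < t ∧ t < q) ∨ (q < t ∧ t < s) ∨ s < t := by
          have t1 : t ≠ p := by rintro rfl; omega
          have t2 : t ≠ p+1 := by rintro rfl; omega
          have t3 : t ≠ q := by rintro rfl; omega
          have t4 : t ≠ s := by rintro rfl; omega
          omega
        rcases hreg with h | ⟨h1, h2⟩ | ⟨h1, h2⟩ | h
        · exact hforb t (p+1) q (by omega) (by omega) (by omega) (by omega)
        · exact hforb p t s (by omega) (by omega) (by omega) (by omega)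
        · exact hforb p t s (by omega) (by omega) (by omega) (by omega)
        · exact hforb (p+1) q t (by omega) (by omega) (by omega) (by omega)
      have hB1 : w.getD (p+1) 0 = 1 := by
        by_contra hcB
        obtain ⟨t, ht, hvt⟩ := hocc (w.getD (p+1) 0 - 1) (by omega) (by omega)
        have hreg : t < p ∨ (p + 1 < t ∧ t < q) ∨ (q < t ∧ t < s) ∨ s < t := by
          have t1 : t ≠ p := by rintro rfl; omega
          have t2 : t ≠ p+1 := by rintro rfl; omega
          have t3 : t ≠ q := by rintro rfl; omega
          have t4 : t ≠ s := by rintro rfl; omega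
          omega
        rcases hreg with h | ⟨h1, h2⟩ | ⟨h1, h2⟩ | h
        · exact hforb t (p+1) q (by omega) (by omega) (by omega) (by omega)
        · exact hforb p t s (by omega) (by omega) (by omega) (by omega)
        · exact hforb p t s (by omega) (by omega) (by omega) (by omega)
        · exact hforb (p+1) q t (by omega) (by omega) (by omega) (by omega)
      obtain ⟨t, ht, hvt⟩ := hocc 2 (by omega) (by omega)
      have hreg : t < p ∨ (p + 1 < t ∧ t < q) ∨ (q < t ∧ t < s) ∨ s < t := by
        have t1 : t ≠ p := by rintro rfl; omega
        have t2 : t ≠ p+1 := by rintro rfl; omega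
        have t3 : t ≠ q := by rintro rfl; omega
        have t4 : t ≠ s := by rintro rfl; omega
        omega
      rcases hreg with h | ⟨h1, h2⟩ | ⟨h1, h2⟩ | h
      · exact hforb t p (p+1) (by omega) (by omega) (by omega) (by omega)
      · exact hforb t q s (by omega) (by omega) (by omega) (by omega)
      · exact hforb p (p+1) t (by omega) (by omega) (by omega) (by omega)
      · exact hforb p (p+1) t (by omega) (by omega) (by omega) (by omega)

lemma exists_dbl : ∀ N (w : List ℕ), w.length ≤ N →
    (∀ p q, p < q → q < w.length → w.getD p 0 = w.getD q 0 → q = p + 1) →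
    (∀ v, w.count v = 0 ∨ w.count v = 2) →
    ∃ u, w = dbl u := by
  intro N
  induction N with
  | zero =>
    intro w hlen _ _
    rcases w with _ | ⟨x, w'⟩
    · exact ⟨[], rfl⟩
    · simp at hlen
  | succ N ih =>
    intro w hlen hadj hcnt
    rcases w with _ | ⟨x, w'⟩
    · exact ⟨[], rfl⟩
    have hx : 0 < (x :: w').count x := by simp
    have hcx : (x :: w').count x = 2 := by rcases hcnt x with h | h <;> omega
    obtain ⟨p, q, hpq, hq, hvp, hvq⟩ := two_pos_of_count (x :: w') x hcx.ge
    have h0 : (x :: w').getD 0 0 = x := rfl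
    have hp0 : p = 0 := by
      by_contra hp
      have e1 := hadj 0 p (by omega) (by omega) (by rw [hvp, h0])
      have e2 := hadj 0 q (by omega) hq (by rw [hvq, h0])
      omega
    have hq1 : q = 1 := by
      have := hadj 0 q (by omega) hq (by rw [hvq, h0])
      omega
    rcases w' with _ | ⟨y, w''⟩
    · simp at hq; omega
    have hyx : y = x := by
      rw [hq1] at hvq
      exact hvq
    subst hyx
    obtain ⟨u, hu⟩ := ih w'' (by simp at hlen ⊢; omega)
      (by
        intro a b h1 h2 h3
        have := hadj (a + 2) (b + 2) (by omega)
          (by simp at h2 ⊢; omega)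
          (by simpa only [List.getD_cons_succ] using h3)
        omega)
      (by
        intro v
        have hv := hcnt v
        rcases eq_or_ne v y with rfl | hne
        · left
          simp [List.count_cons] at hv ⊢
          omega
        · have : (y :: y :: w'').count v = w''.count v := by
            simp [List.count_cons, hne.symm]
          omega)
    exact ⟨y :: u, by rw [dbl_cons, hu]⟩

lemma classify_s11 (n : ℕ) (hn : 3 ≤ n) (w : List ℕ) (hMS : IsMultisetPerm n w)
    (a1221 : Avoids w [1,2,2,1]) (a2112 : Avoids w [2,1,1,2])
    (a123 : Avoids w [1,2,3]) (a231 : Avoids w [2,3,1]) (a312 : Avoids w [3,1,2]) :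
    ∃ k, 1 ≤ k ∧ k ≤ n ∧ w = wkp n k := by
  obtain ⟨u, rfl⟩ := exists_dbl w.length w le_rfl
    (adjacency n hn w hMS a1221 a2112 a123 a231 a312)
    (fun v => by have := hMS v; split_ifs at this <;> omega)
  have hcu : ∀ v, u.count v = if 1 ≤ v ∧ v ≤ n then 1 else 0 := by
    intro v
    have := hMS v
    rw [count_dbl] at this
    split_ifs at this ⊢ <;> omega
  have hnodup : u.Nodup := List.nodup_iff_count_le_one.mpr
    (fun v => by rw [hcu]; split_ifs <;> omega)
  have hlenu : u.length = n := by
    have hcard := List.toFinset_card_of_nodup hnodup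
    have hset : u.toFinset = Finset.Icc 1 n := by
      ext v
      rw [List.mem_toFinset, Finset.mem_Icc, ← List.count_pos_iff, hcu]
      split_ifs with h
      · simpa using h
      · simpa using h
    rw [hset, Nat.card_Icc] at hcard
    omega
  have hucc : ∀ v, 1 ≤ v → v ≤ n → ∃ t, t < u.length ∧ u.getD t 0 = v := by
    intro v h1 h2
    apply pos_of_count
    rw [hcu, if_pos ⟨h1, h2⟩]
  have humax : ∀ t, t < u.length → 1 ≤ u.getD t 0 ∧ u.getD t 0 ≤ n := by
    intro t ht
    by_contra hc
    have h0 : u.count (u.getD t 0) = 0 := by rw [hcu, if_neg]; omega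
    have h1 : 0 < u.count (u.getD t 0) := by
      apply List.count_pos_iff.mpr
      rw [getD_eq_get u t ht]
      exact List.getElem_mem ht
    omega
  have hudist : ∀ a b, a < b → b < u.length → u.getD a 0 ≠ u.getD b 0 := by
    intro a b h1 h2 hcc
    have h3 : 3 ≤ (dbl u).count (u.getD a 0) :=
      count_ge_three _ _ (2*a) (2*a+1) (2*b) (by omega) (by omega)
        (by rw [length_dbl]; omega)
        (by rw [getD_dbl]; congr 1; omega)
        (by rw [getD_dbl]; congr 1; omega)
        (by rw [getD_dbl, show (2*b)/2 = b by omega]; exact hcc.symm)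
    rw [count_dbl, hcu] at h3
    split_ifs at h3 <;> omega
  have hg : ∀ i : ℕ, (dbl u).getD (2*i) 0 = u.getD i 0 := by
    intro i
    rw [getD_dbl]
    congr 1
    omega
  have huforb : ∀ i j l : ℕ, i < j → j < l → l < u.length →
      ((u.getD i 0 < u.getD j 0 ∧ u.getD j 0 < u.getD l 0) ∨
       (u.getD l 0 < u.getD i 0 ∧ u.getD i 0 < u.getD j 0) ∨
       (u.getD j 0 < u.getD l 0 ∧ u.getD l 0 < u.getD i 0)) → False := by
    intro i j l h1 h2 h3 hd
    have l1 : 2*i < 2*j := by omega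
    have l2 : 2*j < 2*l := by omega
    have l3 : 2*l < (dbl u).length := by rw [length_dbl]; omega
    rw [← hg i, ← hg j, ← hg l] at hd
    rcases hd with ⟨u1, u2⟩ | ⟨u1, u2⟩ | ⟨u1, u2⟩
    · exact na123 _ a123 _ _ _ l1 l2 l3 u1 u2
    · exact na231 _ a231 _ _ _ l1 l2 l3 u1 u2
    · exact na312 _ a312 _ _ _ l1 l2 l3 u1 u2
  set k := u.getD 0 0 with hk
  have hkb : 1 ≤ k ∧ k ≤ n := humax 0 (by omega)
  have hstep : ∀ i, i + 1 < u.length →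
      (1 < u.getD i 0 ∧ u.getD (i+1) 0 = u.getD i 0 - 1) ∨
      (u.getD i 0 = 1 ∧ u.getD (i+1) 0 = n) := by
    intro i hi
    have hne := hudist i (i+1) (by omega) hi
    have mi := humax i (by omega)
    have mi1 := humax (i+1) hi
    rcases Nat.lt_or_ge (u.getD i 0) (u.getD (i+1) 0) with hab | hab'
    · have ha1 : u.getD i 0 = 1 := by
        by_contra hc
        obtain ⟨t, ht, hvt⟩ := hucc (u.getD i 0 - 1) (by omega) (by omega)
        have hr : t < i ∨ i + 1 < t := by
          have t1 : t ≠ i := by rintro rfl; omega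
          have t2 : t ≠ i+1 := by rintro rfl; omega
          omega
        rcases hr with h | h
        · exact huforb t i (i+1) (by omega) (by omega) (by omega) (by omega)
        · exact huforb i (i+1) t (by omega) (by omega) (by omega) (by omega)
      have hbn : u.getD (i+1) 0 = n := by
        by_contra hc
        obtain ⟨t, ht, hvt⟩ := hucc (u.getD (i+1) 0 + 1) (by omega) (by omega)
        have hr : t < i ∨ i + 1 < t := by
          have t1 : t ≠ i := by rintro rfl; omega
          have t2 : t ≠ i+1 := by rintro rfl; omega
          omega
        rcases hr with h | h
        · exact huforb t i (i+1) (by omega) (by omega) (by omega) (by omega)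
        · exact huforb i (i+1) t (by omega) (by omega) (by omega) (by omega)
      exact Or.inr ⟨ha1, hbn⟩
    · have hab : u.getD (i+1) 0 < u.getD i 0 := by omega
      have hbd : u.getD (i+1) 0 = u.getD i 0 - 1 := by
        by_contra hc
        obtain ⟨t, ht, hvt⟩ := hucc (u.getD i 0 - 1) (by omega) (by omega)
        have hr : t < i ∨ i + 1 < t := by
          have t1 : t ≠ i := by rintro rfl; omega
          have t2 : t ≠ i+1 := by rintro rfl; omega
          omega
        rcases hr with h | h
        · exact huforb t i (i+1) (by omega) (by omega) (by omega) (by omega)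
        · exact huforb i (i+1) t (by omega) (by omega) (by omega) (by omega)
      exact Or.inl ⟨by omega, hbd⟩
  have hglob : ∀ i, i < u.length → u.getD i 0 = if i < k then k - i else n + k - i := by
    intro i
    induction i with
    | zero =>
      intro _
      rw [if_pos (by omega)]
      omega
    | succ i ih =>
      intro hi
      have hprev := ih (by omega)
      rcases hstep i hi with ⟨h1, h2⟩ | ⟨h1, h2⟩
      · rw [hprev] at h1 h2
        rw [h2]
        split_ifs at * <;> omega
      · rw [hprev] at h1
        rw [h2]
        split_ifs at * <;> omega
  have hurot : u = rotw n k := by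
    apply List.ext_getElem (by rw [hlenu, length_rotw n k hkb.2])
    intro i hi hi'
    rw [← getD_eq_get u i hi, ← getD_eq_get _ i hi', hglob i hi,
      getD_rotw n k i hkb.2 (by omega)]
  exact ⟨k, hkb.1, hkb.2, by rw [hurot]; rfl⟩

theorem nonnesting_avoid_123_231_312 (n : ℕ) (hn : 3 ≤ n) :
    {w : List ℕ | IsNonnesting n w ∧
      Avoids w [1,2,3] ∧ Avoids w [2,3,1] ∧ Avoids w [3,1,2]}.ncard = n := by
  have hSeq : {w : List ℕ | IsNonnesting n w ∧
      Avoids w [1,2,3] ∧ Avoids w [2,3,1] ∧ Avoids w [3,1,2]} =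
      (fun k => wkp n k) '' (Set.Icc 1 n) := by
    ext w
    simp only [Set.mem_setOf_eq, Set.mem_image, Set.mem_Icc]
    constructor
    · rintro ⟨⟨hMS, h1221, h2112⟩, h123, h231, h312⟩
      obtain ⟨k, hk1, hk2, rfl⟩ := classify_s11 n hn w hMS h1221 h2112 h123 h231 h312
      exact ⟨k, ⟨hk1, hk2⟩, rfl⟩
    · rintro ⟨k, ⟨hk1, hk2⟩, rfl⟩
      obtain ⟨a1, a2, a3, a4, a5⟩ := wkp_avoids n k hk1 hk2
      exact ⟨⟨wkp_perm n k hk1 hk2, a4, a5⟩, a1, a2, a3⟩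
  rw [hSeq, Set.ncard_image_of_injOn, ← Finset.coe_Icc, Set.ncard_coe_finset,
    Nat.card_Icc]
  · omega
  · intro k1 h1 k2 h2 heq
    have e1 := wkp_first n k1 h1.1 h1.2
    have e2 := wkp_first n k2 h2.1 h2.2
    simp only [] at heq
    rw [heq, e2] at e1
    exact e1.symm
end
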